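/- arXiv:1604.05809 — 4 statements merged into one kernel-verified Lean document; each statement's English description precedes it below -/
import Mathlib

section
/- Assume C₀ := sup_{x∈Λ} Σ_{y∈Λ} Σ_{Z⊆Λ: x,y∈Z} ‖h_Z‖ < ∞ and set v = 2eC₀. Then for every R > 0, every A ∈ 𝒜_X and B ∈ 𝒜_Y with X, Y ⊆ Λ and d(X,Y) > 0, and every t ≥ 0: ‖[τ^{(<R)}_{t,Λ}(A), B]‖ ≤ 2‖A‖‖B‖|X| exp(vt − d(X,Y)/R). -/
noncomputable section

open Complex

variable {Ω : Type*} [MetricSpace Ω]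
variable {H : Type*} [NormedAddCommGroup H] [InnerProductSpace ℂ H] [CompleteSpace H]

/-- The commutator `[A,B] = AB - BA` of two bounded operators. -/
def opComm (A B : H →L[ℂ] H) : H →L[ℂ] H := A * B - B * A

/-- The Heisenberg evolution `e^{itK} A e^{-itK}` generated by a bounded operator `K`. -/
def heis (K : H →L[ℂ] H) (t : ℝ) (A : H →L[ℂ] H) : H →L[ℂ] H :=
  NormedSpace.exp ((I * t) • K) * A * NormedSpace.exp ((-(I * t)) • K)

/-- The diameter of a finite subset of a metric space. -/
def fdiam (Z : Finset Ω) : ℝ := Metric.diam (Z : Set Ω)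

/-- The distance `d(X,Y) = min {d(x,y) : x ∈ X, y ∈ Y}` between two finite sets. -/
def fsetDist (X Y : Finset Ω) : ℝ := sInf (Set.image2 dist (X : Set Ω) (Y : Set Ω))

/-- The short-range part `h_Z^{(<R)}` of the interaction: `h_Z` if `diam Z < R`, else `0`. -/
def hlt (h : Finset Ω → (H →L[ℂ] H)) (R : ℝ) (Z : Finset Ω) : H →L[ℂ] H :=
  if fdiam Z < R then h Z else 0

/-- The long-range part `h_Z^{(≥R)} = h_Z - h_Z^{(<R)}`. -/
def hge (h : Finset Ω → (H →L[ℂ] H)) (R : ℝ) (Z : Finset Ω) : H →L[ℂ] H :=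
  h Z - hlt h R Z

/-- The Hamiltonian `H_Λ = ∑_{Z ⊆ Λ} h_Z`. -/
def Ham (Λ : Finset Ω) (h : Finset Ω → (H →L[ℂ] H)) : H →L[ℂ] H :=
  ∑ Z ∈ Λ.powerset, h Z

/-- The `r`-neighborhood `X̃_r = {z ∈ Λ : d(z,X) ≤ r}` of `X` inside `Λ`. -/
def nbhd (Λ X : Finset Ω) (r : ℝ) : Finset Ω :=
  Λ.filter fun z => ∃ x ∈ X, dist z x ≤ r


open NormedSpace

section AuxOps
instance instNormedAlgebraRatCLM : NormedAlgebra ℚ (H →L[ℂ] H) :=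
  NormedAlgebra.restrictScalars ℚ ℂ _

lemma norm_opComm_le (A B : H →L[ℂ] H) : ‖opComm A B‖ ≤ 2 * ‖A‖ * ‖B‖ := by
  have h1 : ‖A * B‖ ≤ ‖A‖ * ‖B‖ := norm_mul_le _ _
  have h2 : ‖B * A‖ ≤ ‖B‖ * ‖A‖ := norm_mul_le _ _
  calc ‖opComm A B‖ ≤ ‖A * B‖ + ‖B * A‖ := norm_sub_le _ _
  _ ≤ 2 * ‖A‖ * ‖B‖ := by nlinarith [norm_nonneg A, norm_nonneg B]

-- exp inverse
lemma exp_mul_exp_neg (a : H →L[ℂ] H) : NormedSpace.exp a * NormedSpace.exp (-a) = 1 := by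
  rw [← exp_add_of_commute (Commute.neg_right (Commute.refl a)), add_neg_cancel, NormedSpace.exp_zero]

lemma exp_neg_mul_exp' (a : H →L[ℂ] H) : NormedSpace.exp (-a) * NormedSpace.exp a = 1 := by
  rw [← exp_add_of_commute (Commute.neg_left (Commute.refl a)), neg_add_cancel, NormedSpace.exp_zero]

-- unitarity / norm of conjugation
lemma norm_exp_conj (a : H →L[ℂ] H) (ha : star a = -a) (x : H →L[ℂ] H) :
    ‖NormedSpace.exp a * x * NormedSpace.exp (-a)‖ = ‖x‖ := by
  have hnorm : ∀ b : H →L[ℂ] H, star b = -b → ‖NormedSpace.exp b‖ ≤ 1 := by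
    intro b hb
    have h2 : ‖NormedSpace.exp b‖ * ‖NormedSpace.exp b‖ ≤ 1 := by
      rw [← CStarRing.norm_star_mul_self (x := NormedSpace.exp b)]
      rw [star_exp, hb, exp_neg_mul_exp']
      exact ContinuousLinearMap.norm_id_le
    nlinarith [norm_nonneg (NormedSpace.exp b)]
  have h1 : ‖NormedSpace.exp a‖ ≤ 1 := hnorm a ha
  have h2 : ‖NormedSpace.exp (-a)‖ ≤ 1 := by
    refine hnorm (-a) ?_
    rw [star_neg, ha, neg_neg]
  apply le_antisymm
  · calc ‖NormedSpace.exp a * x * NormedSpace.exp (-a)‖ ≤ ‖NormedSpace.exp a * x‖ * ‖NormedSpace.exp (-a)‖ := norm_mul_le _ _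
    _ ≤ ‖NormedSpace.exp a‖ * ‖x‖ * ‖NormedSpace.exp (-a)‖ := by
        gcongr; exact norm_mul_le _ _
    _ ≤ 1 * ‖x‖ * 1 := by
        have := norm_nonneg x
        gcongr <;> nlinarith [norm_nonneg (NormedSpace.exp a), norm_nonneg (NormedSpace.exp (-a)), norm_nonneg (NormedSpace.exp a * x)]
    _ = ‖x‖ := by ring
  · have hx : x = NormedSpace.exp (-a) * (NormedSpace.exp a * x * NormedSpace.exp (-a)) * NormedSpace.exp a := by
      rw [show NormedSpace.exp (-a) * (NormedSpace.exp a * x * NormedSpace.exp (-a)) * NormedSpace.exp a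
          = (NormedSpace.exp (-a) * NormedSpace.exp a) * x * (NormedSpace.exp (-a) * NormedSpace.exp a) by noncomm_ring,
        exp_neg_mul_exp', one_mul, mul_one]
    calc ‖x‖ = ‖NormedSpace.exp (-a) * (NormedSpace.exp a * x * NormedSpace.exp (-a)) * NormedSpace.exp a‖ := by rw [← hx]
    _ ≤ ‖NormedSpace.exp (-a)‖ * ‖NormedSpace.exp a * x * NormedSpace.exp (-a)‖ * ‖NormedSpace.exp a‖ := by
        calc _ ≤ ‖NormedSpace.exp (-a) * (NormedSpace.exp a * x * NormedSpace.exp (-a))‖ * ‖NormedSpace.exp a‖ := norm_mul_le _ _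
        _ ≤ _ := by gcongr; exact norm_mul_le _ _
    _ ≤ 1 * ‖NormedSpace.exp a * x * NormedSpace.exp (-a)‖ * 1 := by
        have := norm_nonneg (NormedSpace.exp a * x * NormedSpace.exp (-a))
        gcongr <;> nlinarith [norm_nonneg (NormedSpace.exp (-a)), norm_nonneg (NormedSpace.exp a),
          mul_nonneg (norm_nonneg (NormedSpace.exp (-a))) (norm_nonneg (NormedSpace.exp a * x * NormedSpace.exp (-a)))]
    _ = _ := by ring

-- derivative of s ↦ exp((c*s)•M)
lemma hasDerivAt_expCS (M : H →L[ℂ] H) (c : ℂ) (s : ℝ) :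
    HasDerivAt (fun u : ℝ => NormedSpace.exp ((c * u) • M)) (c • (NormedSpace.exp ((c * s) • M) * M)) s := by
  have hg : HasDerivAt (fun z : ℂ => NormedSpace.exp (z • M)) (NormedSpace.exp ((c * s) • M) * M) (c * s) :=
    hasDerivAt_exp_smul_const M ((c * s : ℂ))
  have hh : HasDerivAt (fun u : ℝ => (c * u : ℂ)) c s := by
    simpa using ((hasDerivAt_id (s : ℂ)).const_mul c).comp_ofReal
  exact HasDerivAt.scomp s hg hh

/-- `e^{cs M}` -/
def eU (M : H →L[ℂ] H) (c : ℂ) (s : ℝ) : H →L[ℂ] H := NormedSpace.exp ((c * s) • M)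

lemma eU_neg (M : H →L[ℂ] H) (c : ℂ) (s : ℝ) : eU M (-c) s = NormedSpace.exp (-((c * s) • M)) := by
  rw [eU, ← neg_smul, neg_mul]

lemma eU_mul_eU_neg (M : H →L[ℂ] H) (c : ℂ) (s : ℝ) : eU M c s * eU M (-c) s = 1 := by
  rw [eU_neg, eU, ← exp_add_of_commute (Commute.neg_right (Commute.refl _)), add_neg_cancel,
    NormedSpace.exp_zero]

lemma eU_neg_mul_eU (M : H →L[ℂ] H) (c : ℂ) (s : ℝ) : eU M (-c) s * eU M c s = 1 := by
  rw [eU_neg, eU, ← exp_add_of_commute (Commute.neg_left (Commute.refl _)), neg_add_cancel,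
    NormedSpace.exp_zero]

lemma hasDerivAt_eU (M : H →L[ℂ] H) (c : ℂ) (s : ℝ) :
    HasDerivAt (eU M c) (c • (eU M c s * M)) s := hasDerivAt_expCS M c s

lemma continuous_eU (M : H →L[ℂ] H) (c : ℂ) : Continuous (eU M c) :=
  Differentiable.continuous (fun s => (hasDerivAt_eU M c s).differentiableAt)

lemma eU_comm (M : H →L[ℂ] H) (c : ℂ) (s : ℝ) : eU M c s * M = M * eU M c s :=
  (((Commute.refl M).smul_left _).exp_left).eq

lemma norm_conj_eU (M : H →L[ℂ] H) (hM : IsSelfAdjoint M) (c : ℂ)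
    (hc : starRingEnd ℂ c = -c) (s : ℝ) (x : H →L[ℂ] H) :
    ‖eU M c s * x * eU M (-c) s‖ = ‖x‖ := by
  rw [eU_neg, eU]
  apply norm_exp_conj
  rw [star_smul, hM.star_eq, ← neg_smul]
  congr 1
  rw [show star (c * (s:ℂ)) = (starRingEnd ℂ) (c * (s:ℂ)) from rfl, map_mul, hc,
    Complex.conj_ofReal]
  ring

lemma heis_eq_eU (K : H →L[ℂ] H) (s : ℝ) (x : H →L[ℂ] H) :
    heis K s x = eU K I s * x * eU K (-I) s := by
  rw [heis, eU, eU]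
  congr 2
  rw [neg_mul]

lemma norm_heis (K : H →L[ℂ] H) (hK : IsSelfAdjoint K) (s : ℝ) (x : H →L[ℂ] H) :
    ‖heis K s x‖ = ‖x‖ := by
  rw [heis_eq_eU]
  exact norm_conj_eU K hK I (by simp) s x

/-- the middle algebraic identity -/
lemma middle_id (a d kc k : H →L[ℂ] H) (hca : kc * a = a * kc) :
    I • (kc * (a * d - d * a)) + (a * (I • (d * k - k * d)) - (I • (d * k - k * d)) * a)
      + (-I) • ((a * d - d * a) * kc)
    = (-I) • (a * ((k - kc) * d - d * (k - kc)) - ((k - kc) * d - d * (k - kc)) * a) := by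
  have h1 : a * (I • (d * k - k * d)) = I • (a * (d * k - k * d)) := (mul_smul_comm _ _ _)
  have h2 : (I • (d * k - k * d)) * a = I • ((d * k - k * d) * a) := (smul_mul_assoc _ _ _)
  rw [h1, h2, ← sub_eq_zero]
  have expand : I • (kc * (a * d - d * a)) + (I • (a * (d * k - k * d)) - I • ((d * k - k * d) * a))
      + (-I) • ((a * d - d * a) * kc)
      - (-I) • (a * ((k - kc) * d - d * (k - kc)) - ((k - kc) * d - d * (k - kc)) * a)
      = I • ((kc * (a * d - d * a)) + (a * (d * k - k * d)) - ((d * k - k * d) * a)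
          - ((a * d - d * a) * kc)
          + (a * ((k - kc) * d - d * (k - kc)) - ((k - kc) * d - d * (k - kc)) * a)) := by
    module
  have core : (kc * (a * d - d * a)) + (a * (d * k - k * d)) - ((d * k - k * d) * a)
      - ((a * d - d * a) * kc)
      + (a * ((k - kc) * d - d * (k - kc)) - ((k - kc) * d - d * (k - kc)) * a)
      = (kc * a - a * kc) * d + d * (a * kc - kc * a) := by
    noncomm_ring
  rw [expand, core, hca]
  simp

section Duhamel
variable (K KZ A B : H →L[ℂ] H)

/-- `D s = e^{-isK} B e^{isK}` -/
def DD (K B : H →L[ℂ] H) (s : ℝ) : H →L[ℂ] H := eU K (-I) s * B * eU K I s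

lemma continuous_DD : Continuous (DD K B) :=
  ((continuous_eU K (-I)).mul continuous_const).mul (continuous_eU K I)

lemma hasDerivAt_DD (s : ℝ) :
    HasDerivAt (DD K B) (I • (DD K B s * K - K * DD K B s)) s := by
  have h0 : HasDerivAt (DD K B)
      (((-I) • (eU K (-I) s * K)) * B * eU K I s
        + (eU K (-I) s * B) * (I • (eU K I s * K))) s :=
    (((hasDerivAt_eU K (-I) s).mul_const B).mul (hasDerivAt_eU K I s))
  convert h0 using 1
  have t1 : ((-I : ℂ)) • (eU K (-I) s * K) * B * eU K I s
      = (-I : ℂ) • (K * (eU K (-I) s * B * eU K I s)) := by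
    rw [eU_comm K (-I) s]
    simp only [smul_mul_assoc, mul_assoc]
  have t2 : (eU K (-I) s * B) * ((I : ℂ) • (eU K I s * K))
      = (I : ℂ) • ((eU K (-I) s * B * eU K I s) * K) := by
    simp only [mul_smul_comm, mul_assoc]
  rw [t1, t2, DD]
  module

lemma opComm_heis_eq (s : ℝ) (x : H →L[ℂ] H) :
    opComm (heis K s x) B = eU K I s * opComm x (DD K B s) * eU K (-I) s := by
  have hab : eU K I s * eU K (-I) s = 1 := eU_mul_eU_neg K I s
  have h1 : ∀ y : H →L[ℂ] H, eU K I s * (eU K (-I) s * y) = y := by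
    intro y; rw [← mul_assoc, hab, one_mul]
  simp only [heis_eq_eU, opComm, DD, mul_sub, sub_mul, mul_assoc, h1, hab, mul_one]

/-- `u s = P s [A, D s] P̄ s` with `P = e^{isKc}` -/
def uu (K KZ A B : H →L[ℂ] H) (s : ℝ) : H →L[ℂ] H :=
  eU (K - KZ) I s * (A * DD K B s - DD K B s * A) * eU (K - KZ) (-I) s

def ww (K KZ A B : H →L[ℂ] H) (s : ℝ) : H →L[ℂ] H :=
  eU (K - KZ) I s *
    ((-I) • (A * (KZ * DD K B s - DD K B s * KZ) - (KZ * DD K B s - DD K B s * KZ) * A)) *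
    eU (K - KZ) (-I) s

lemma continuous_ww : Continuous (ww K KZ A B) := by
  have hD := continuous_DD K B
  refine ((continuous_eU _ I).mul (Continuous.const_smul ?_ ((-I : ℂ)))).mul (continuous_eU _ (-I))
  exact ((continuous_const.mul ((continuous_const.mul hD).sub (hD.mul continuous_const))).sub
    (((continuous_const.mul hD).sub (hD.mul continuous_const)).mul continuous_const))

lemma hasDerivAt_uu (hcomm : (K - KZ) * A = A * (K - KZ)) (s : ℝ) :
    HasDerivAt (uu K KZ A B) (ww K KZ A B s) s := by
  have hD := hasDerivAt_DD K B s
  have hinner : HasDerivAt (fun r => A * DD K B r - DD K B r * A)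
      (A * (I • (DD K B s * K - K * DD K B s)) - (I • (DD K B s * K - K * DD K B s)) * A) s :=
    (hD.const_mul A).sub (hD.mul_const A)
  have h0 : HasDerivAt (uu K KZ A B)
      (((I • (eU (K - KZ) I s * (K - KZ))) * (A * DD K B s - DD K B s * A)
        + eU (K - KZ) I s *
          (A * (I • (DD K B s * K - K * DD K B s)) - (I • (DD K B s * K - K * DD K B s)) * A))
        * eU (K - KZ) (-I) s
        + (eU (K - KZ) I s * (A * DD K B s - DD K B s * A))
          * ((-I) • (eU (K - KZ) (-I) s * (K - KZ)))) s :=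
    ((hasDerivAt_eU (K - KZ) I s).mul hinner).mul (hasDerivAt_eU (K - KZ) (-I) s)
  convert h0 using 1
  set P := eU (K - KZ) I s with hP
  set P' := eU (K - KZ) (-I) s with hP'
  set d := DD K B s with hd
  set E := A * d - d * A with hE
  set inner' := A * (I • (d * K - K * d)) - (I • (d * K - K * d)) * A with hinner'
  have hP'Kc : P' * (K - KZ) = (K - KZ) * P' := eU_comm _ _ _
  have factor1 : (I • (P * (K - KZ))) * E * P' = P * (I • ((K - KZ) * E)) * P' := by
    rw [smul_mul_assoc, mul_assoc, mul_smul_comm]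
  have factor3 : (P * E) * ((-I) • (P' * (K - KZ))) = P * ((-I) • (E * (K - KZ))) * P' := by
    have e : P * ((-I) • (E * (K - KZ))) * P' = (-I) • (P * E * ((K - KZ) * P')) := by
      simp only [mul_smul_comm, smul_mul_assoc, mul_assoc]
    rw [hP'Kc, mul_smul_comm, ← e]
  have assemble : ∀ x y z : H →L[ℂ] H,
      P * x * P' + P * y * P' + P * z * P' = P * (x + y + z) * P' := by
    intro x y z; noncomm_ring
  rw [add_mul, factor1, factor3, assemble, ww]
  congr 2
  have hmid := middle_id A d (K - KZ) K hcomm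
  have hKZ : K - (K - KZ) = KZ := sub_sub_cancel K KZ
  rw [hKZ] at hmid
  exact hmid.symm
end Duhamel

section Duhamel2
variable (K KZ A B : H →L[ℂ] H)

lemma continuous_opComm_heis (x : H →L[ℂ] H) :
    Continuous fun s => opComm (heis K s x) B := by
  have : (fun s => opComm (heis K s x) B) = fun s => eU K I s * opComm x (DD K B s) * eU K (-I) s := by
    funext s; exact opComm_heis_eq K B s x
  rw [this]
  have hD := continuous_DD K B
  exact ((continuous_eU K I).mul
    ((continuous_const.mul hD).sub (hD.mul continuous_const))).mul (continuous_eU K (-I))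

theorem duhamel (hK : IsSelfAdjoint K) (hKc : IsSelfAdjoint (K - KZ))
    (hcomm : (K - KZ) * A = A * (K - KZ)) (t : ℝ) (ht : 0 ≤ t) :
    ‖opComm (heis K t A) B‖ ≤
      ‖opComm A B‖ + ∫ s in (0:ℝ)..t, 2 * ‖A‖ * ‖opComm (heis K s KZ) B‖ := by
  have hIc : (starRingEnd ℂ) I = -I := by simp
  -- conjugation norms
  have hconjP : ∀ x : H →L[ℂ] H, ∀ s : ℝ,
      ‖eU (K - KZ) I s * x * eU (K - KZ) (-I) s‖ = ‖x‖ := fun x s =>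
    norm_conj_eU _ hKc I hIc s x
  have hconjQ : ∀ x : H →L[ℂ] H, ∀ s : ℝ, ‖eU K I s * x * eU K (-I) s‖ = ‖x‖ := fun x s =>
    norm_conj_eU _ hK I hIc s x
  -- FTC
  have hftc : ∫ s in (0:ℝ)..t, ww K KZ A B s = uu K KZ A B t - uu K KZ A B 0 :=
    intervalIntegral.integral_eq_sub_of_hasDerivAt
      (fun s _ => hasDerivAt_uu K KZ A B hcomm s)
      ((continuous_ww K KZ A B).intervalIntegrable 0 t)
  have hu_t : ‖opComm (heis K t A) B‖ = ‖uu K KZ A B t‖ := by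
    rw [opComm_heis_eq, hconjQ, uu, hconjP, opComm]
  have hu_0 : uu K KZ A B 0 = opComm A B := by
    have h0 : ∀ M : H →L[ℂ] H, ∀ c : ℂ, eU M c 0 = 1 := by
      intro M c
      rw [eU]
      norm_num [NormedSpace.exp_zero]
    rw [uu, DD, h0, h0, h0, h0, opComm]
    simp
  have step1 : ‖uu K KZ A B t‖ ≤ ‖uu K KZ A B 0‖ + ‖∫ s in (0:ℝ)..t, ww K KZ A B s‖ := by
    have e : uu K KZ A B t = uu K KZ A B 0 + (uu K KZ A B t - uu K KZ A B 0) := by abel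
    rw [e, hftc]
    exact norm_add_le _ _
  have step2 : ‖∫ s in (0:ℝ)..t, ww K KZ A B s‖ ≤ ∫ s in (0:ℝ)..t, ‖ww K KZ A B s‖ :=
    intervalIntegral.norm_integral_le_integral_norm ht
  have step3 : ∫ s in (0:ℝ)..t, ‖ww K KZ A B s‖
      ≤ ∫ s in (0:ℝ)..t, 2 * ‖A‖ * ‖opComm (heis K s KZ) B‖ := by
    apply intervalIntegral.integral_mono_on ht
    · exact (continuous_ww K KZ A B).norm.intervalIntegrable 0 t
    · exact (continuous_const.mul
        (continuous_opComm_heis K B KZ).norm).intervalIntegrable 0 t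
    · intro s _
      have e1 : ‖ww K KZ A B s‖ = ‖opComm A (opComm KZ (DD K B s))‖ := by
        rw [ww, hconjP, norm_smul]
        simp [opComm]
      have e2 : ‖opComm (heis K s KZ) B‖ = ‖opComm KZ (DD K B s)‖ := by
        rw [opComm_heis_eq, hconjQ]
      rw [e1, e2]
      have h1 : ‖A * opComm KZ (DD K B s)‖ ≤ ‖A‖ * ‖opComm KZ (DD K B s)‖ := norm_mul_le _ _
      have h2 : ‖opComm KZ (DD K B s) * A‖ ≤ ‖opComm KZ (DD K B s)‖ * ‖A‖ := norm_mul_le _ _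
      calc ‖opComm A (opComm KZ (DD K B s))‖
          ≤ ‖A * opComm KZ (DD K B s)‖ + ‖opComm KZ (DD K B s) * A‖ := norm_sub_le _ _
      _ ≤ 2 * ‖A‖ * ‖opComm KZ (DD K B s)‖ := by
          nlinarith [norm_nonneg A, norm_nonneg (opComm KZ (DD K B s))]
  rw [hu_t]
  calc ‖uu K KZ A B t‖ ≤ ‖uu K KZ A B 0‖ + ‖∫ s in (0:ℝ)..t, ww K KZ A B s‖ := step1
  _ ≤ ‖uu K KZ A B 0‖ + ∫ s in (0:ℝ)..t, ‖ww K KZ A B s‖ := by linarith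
  _ ≤ _ := by rw [hu_0]; linarith

end Duhamel2

lemma opComm_heis_sum {ι : Type*} (S : Finset ι) (f : ι → (H →L[ℂ] H)) (K B : H →L[ℂ] H)
    (s : ℝ) : opComm (heis K s (∑ Z ∈ S, f Z)) B = ∑ Z ∈ S, opComm (heis K s (f Z)) B := by
  simp only [heis, opComm, Finset.mul_sum, Finset.sum_mul, Finset.sum_sub_distrib]


end AuxOps

section AuxGeom
lemma fsetDist_nonneg (X Y : Finset Ω) : 0 ≤ fsetDist X Y := by
  apply Real.sInf_nonneg
  rintro d ⟨x, hx, y, hy, rfl⟩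
  exact dist_nonneg

lemma fsetDist_le (X Y : Finset Ω) {x y : Ω} (hx : x ∈ X) (hy : y ∈ Y) :
    fsetDist X Y ≤ dist x y := by
  apply csInf_le
  · exact ⟨0, by rintro d ⟨x, hx, y, hy, rfl⟩; exact dist_nonneg⟩
  · exact ⟨x, by simpa using hx, y, by simpa using hy, rfl⟩

lemma fsetDist_lt_iff (X Y : Finset Ω) (hX : X.Nonempty) (hY : Y.Nonempty) {c : ℝ}
    (h : fsetDist X Y < c) : ∃ x ∈ X, ∃ y ∈ Y, dist x y < c := by
  obtain ⟨d, hd, hdc⟩ := exists_lt_of_csInf_lt (by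
    obtain ⟨x, hx⟩ := hX; obtain ⟨y, hy⟩ := hY
    exact ⟨dist x y, ⟨x, by simpa using hx, y, by simpa using hy, rfl⟩⟩) h
  obtain ⟨x, hx, y, hy, rfl⟩ := hd
  exact ⟨x, by simpa using hx, y, by simpa using hy, hdc⟩

lemma dist_le_fdiam {Z : Finset Ω} {x y : Ω} (hx : x ∈ Z) (hy : y ∈ Z) :
    dist x y ≤ fdiam Z := by
  apply Metric.dist_le_diam_of_mem _ (by simpa using hx) (by simpa using hy)
  exact Set.Finite.isBounded Z.finite_toSet

open scoped Classical in
/-- indicator that `Z` is within `k` steps of range `< R` from `Y` -/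
def indYR (Y : Finset Ω) (R : ℝ) (k : ℕ) (Z : Finset Ω) : ℝ :=
  if fsetDist Z Y < k * R ∨ ¬Disjoint Z Y then 1 else 0

lemma indYR_nonneg (Y : Finset Ω) (R : ℝ) (k : ℕ) (Z : Finset Ω) : 0 ≤ indYR Y R k Z := by
  rw [indYR]; split <;> norm_num

lemma indYR_le_one (Y : Finset Ω) (R : ℝ) (k : ℕ) (Z : Finset Ω) : indYR Y R k Z ≤ 1 := by
  rw [indYR]; split <;> norm_num

/-- geometric step: if `Z'` touches `Z`, has diameter `< R`, and is `k`-close to `Y`,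
then `Z` is `(k+1)`-close to `Y`. -/
lemma indYR_step (Y Z Z' : Finset Ω) (R : ℝ) (hR : 0 < R) (hY : Y.Nonempty)
    (hdiam : fdiam Z' < R) (hZZ' : ¬Disjoint Z' Z) (k : ℕ) :
    indYR Y R k Z' ≤ indYR Y R (k + 1) Z := by
  rw [indYR, indYR]
  split
  case isTrue hcond =>
    obtain ⟨x, hxZ', hxZ⟩ := Finset.not_disjoint_iff.mp hZZ'
    have hZ'ne : Z'.Nonempty := ⟨x, hxZ'⟩
    have : fsetDist Z Y < (k + 1 : ℕ) * R := by
      rcases hcond with hlt | hndisj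
      · obtain ⟨x', hx', y, hy, hxy⟩ := fsetDist_lt_iff Z' Y hZ'ne hY hlt
        calc fsetDist Z Y ≤ dist x y := fsetDist_le Z Y hxZ hy
        _ ≤ dist x x' + dist x' y := dist_triangle _ _ _
        _ < fdiam Z' + (k : ℝ) * R := by
            have := dist_le_fdiam hxZ' hx'
            linarith
        _ ≤ R + (k : ℝ) * R := by linarith
        _ = ((k + 1 : ℕ) : ℝ) * R := by push_cast; ring
      · obtain ⟨y, hyZ', hyY⟩ := Finset.not_disjoint_iff.mp hndisj
        calc fsetDist Z Y ≤ dist x y := fsetDist_le Z Y hxZ hyY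
        _ ≤ fdiam Z' := dist_le_fdiam hxZ' hyZ'
        _ < R := hdiam
        _ ≤ ((k + 1 : ℕ) : ℝ) * R := by
            have : (1 : ℝ) ≤ ((k + 1 : ℕ) : ℝ) := by push_cast; linarith [Nat.cast_nonneg (α := ℝ) k]
            nlinarith
    rw [if_pos (Or.inl this)]
  case isFalse =>
    split <;> norm_num


end AuxGeom

section AuxChain
variable [DecidableEq Ω]
lemma norm_hlt_le (h : Finset Ω → (H →L[ℂ] H)) (R : ℝ) (Z : Finset Ω) :
    ‖hlt h R Z‖ ≤ ‖h Z‖ := by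
  rw [hlt]; split
  · exact le_refl _
  · simp

/-- the basic one-step chain sum bound -/
lemma chain_sum_le (Λ Z : Finset Ω) (hZΛ : Z ⊆ Λ) (h : Finset Ω → (H →L[ℂ] H)) (R : ℝ)
    (C₀ : ℝ)
    (hC₀ : ∀ x ∈ Λ, ∑ y ∈ Λ,
      ∑ W ∈ Λ.powerset.filter (fun W => x ∈ W ∧ y ∈ W), ‖h W‖ ≤ C₀) :
    ∑ Z' ∈ Λ.powerset.filter (fun Z' => ¬Disjoint Z' Z), ‖hlt h R Z'‖ * Z'.card
      ≤ C₀ * Z.card := by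
  set g : Finset Ω → ℝ := fun Z' => ‖hlt h R Z'‖ * Z'.card with hg
  have hgnn : ∀ Z', 0 ≤ g Z' := fun Z' => mul_nonneg (norm_nonneg _) (Nat.cast_nonneg _)
  set S := Λ.powerset.filter (fun Z' => ¬Disjoint Z' Z) with hS
  -- step A: expand using membership indicator over Z
  have stepA : ∑ Z' ∈ S, g Z' ≤ ∑ Z' ∈ S, ∑ x ∈ Z, (if x ∈ Z' then g Z' else 0) := by
    apply Finset.sum_le_sum
    intro Z' hZ'
    obtain ⟨x₀, hx₀Z', hx₀Z⟩ := Finset.not_disjoint_iff.mp (Finset.mem_filter.mp hZ').2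
    calc g Z' = (if x₀ ∈ Z' then g Z' else 0) := by rw [if_pos hx₀Z']
    _ ≤ ∑ x ∈ Z, (if x ∈ Z' then g Z' else 0) := by
        apply Finset.single_le_sum (fun x _ => ?_) hx₀Z
        split
        · exact hgnn Z'
        · exact le_refl _
  -- step B/C: swap and bound each inner sum by C₀
  have stepD : ∀ x ∈ Z, ∑ Z' ∈ S, (if x ∈ Z' then g Z' else 0) ≤ C₀ := by
    intro x hxZ
    have hxΛ : x ∈ Λ := hZΛ hxZ
    calc ∑ Z' ∈ S, (if x ∈ Z' then g Z' else 0)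
        = ∑ Z' ∈ S.filter (fun Z' => x ∈ Z'), g Z' := (Finset.sum_filter _ _).symm
    _ ≤ ∑ Z' ∈ Λ.powerset.filter (fun Z' => x ∈ Z'), g Z' := by
        apply Finset.sum_le_sum_of_subset_of_nonneg
        · intro W hW
          simp only [hS, Finset.mem_filter] at hW ⊢
          exact ⟨hW.1.1, hW.2⟩
        · exact fun W _ _ => hgnn W
    _ ≤ ∑ Z' ∈ Λ.powerset.filter (fun Z' => x ∈ Z'), ‖h Z'‖ * Z'.card := by
        apply Finset.sum_le_sum
        intro W _
        exact mul_le_mul_of_nonneg_right (norm_hlt_le h R W) (Nat.cast_nonneg _)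
    _ = ∑ Z' ∈ Λ.powerset.filter (fun Z' => x ∈ Z'), ∑ y ∈ Z', ‖h Z'‖ := by
        apply Finset.sum_congr rfl
        intro W _
        rw [Finset.sum_const, nsmul_eq_mul, mul_comm]
    _ = ∑ Z' ∈ Λ.powerset.filter (fun Z' => x ∈ Z'), ∑ y ∈ Λ, (if y ∈ Z' then ‖h Z'‖ else 0) := by
        apply Finset.sum_congr rfl
        intro W hW
        have hWΛ : W ⊆ Λ := Finset.mem_powerset.mp (Finset.mem_filter.mp hW).1
        rw [Finset.sum_ite_mem, Finset.inter_eq_right.mpr hWΛ]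
    _ = ∑ y ∈ Λ, ∑ Z' ∈ Λ.powerset.filter (fun Z' => x ∈ Z'), (if y ∈ Z' then ‖h Z'‖ else 0) :=
        Finset.sum_comm
    _ = ∑ y ∈ Λ, ∑ Z' ∈ Λ.powerset.filter (fun W => x ∈ W ∧ y ∈ W), ‖h Z'‖ := by
        apply Finset.sum_congr rfl
        intro y _
        rw [Finset.sum_filter, Finset.sum_filter]
        apply Finset.sum_congr rfl
        intro W _
        by_cases h1 : x ∈ W <;> by_cases h2 : y ∈ W <;> simp [h1, h2]
    _ ≤ C₀ := hC₀ x hxΛ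
  calc ∑ Z' ∈ S, g Z' ≤ ∑ Z' ∈ S, ∑ x ∈ Z, (if x ∈ Z' then g Z' else 0) := stepA
  _ = ∑ x ∈ Z, ∑ Z' ∈ S, (if x ∈ Z' then g Z' else 0) := Finset.sum_comm
  _ ≤ ∑ _x ∈ Z, C₀ := Finset.sum_le_sum stepD
  _ = C₀ * Z.card := by rw [Finset.sum_const, nsmul_eq_mul, mul_comm]


lemma lr_induct
    (Λ : Finset Ω) (𝓐 : Finset Ω → Subalgebra ℂ (H →L[ℂ] H))
    (hloc : ∀ S S' : Finset Ω, Disjoint S S' → ∀ a ∈ 𝓐 S, ∀ b ∈ 𝓐 S', a * b = b * a)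
    (h : Finset Ω → (H →L[ℂ] H)) (hmem : ∀ Z : Finset Ω, Z ⊆ Λ → h Z ∈ 𝓐 Z)
    (hsa : ∀ Z : Finset Ω, IsSelfAdjoint (h Z))
    (C₀ : ℝ)
    (hC₀ : ∀ x ∈ Λ, ∑ y ∈ Λ,
      ∑ W ∈ Λ.powerset.filter (fun W => x ∈ W ∧ y ∈ W), ‖h W‖ ≤ C₀)
    (hC₀nn : 0 ≤ C₀)
    (R : ℝ) (hR : 0 < R)
    (Y : Finset Ω) (hYne : Y.Nonempty) (B : H →L[ℂ] H) (hB : B ∈ 𝓐 Y)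
    (n : ℕ) :
    ∀ (Z : Finset Ω), Z ⊆ Λ → Z.Nonempty → ∀ A ∈ 𝓐 Z, ∀ t : ℝ, 0 ≤ t →
    ‖opComm (heis (Ham Λ (hlt h R)) t A) B‖ ≤
      2 * ‖A‖ * ‖B‖ * Z.card *
        ((∑ k ∈ Finset.range n, (2*C₀*t)^k / (Nat.factorial k : ℝ) * indYR Y R k Z)
          + (2*C₀*t)^n / (Nat.factorial n : ℝ)) := by
  -- preliminaries
  have hlt_mem : ∀ Z : Finset Ω, Z ⊆ Λ → hlt h R Z ∈ 𝓐 Z := by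
    intro Z hZ
    rw [hlt]; split
    · exact hmem Z hZ
    · exact zero_mem _
  have hlt_sa : ∀ Z : Finset Ω, IsSelfAdjoint (hlt h R Z) := by
    intro Z
    rw [hlt]; split
    · exact hsa Z
    · exact IsSelfAdjoint.zero _
  have hKsa : IsSelfAdjoint (Ham Λ (hlt h R)) := by
    rw [Ham]
    exact Finset.sum_induction _ _ (fun a b ha hb => ha.add hb) (IsSelfAdjoint.zero _)
      (fun W _ => hlt_sa W)
  set K := Ham Λ (hlt h R) with hKdef
  induction n with
  | zero =>
    intro Z hZΛ hZne A hA t ht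
    simp only [Finset.range_zero, Finset.sum_empty, pow_zero, Nat.factorial_zero,
      Nat.cast_one, zero_add]
    have h1 : ‖opComm (heis K t A) B‖ ≤ 2 * ‖A‖ * ‖B‖ := by
      have := norm_opComm_le (heis K t A) B
      rwa [norm_heis K hKsa t A] at this
    have hcard : (1:ℝ) ≤ Z.card := by
      have := hZne.card_pos
      exact_mod_cast this
    calc ‖opComm (heis K t A) B‖ ≤ 2 * ‖A‖ * ‖B‖ := h1
    _ ≤ 2 * ‖A‖ * ‖B‖ * Z.card * (1 / 1) := by
        rw [div_one, mul_one]
        nlinarith [norm_nonneg A, norm_nonneg B, mul_nonneg (norm_nonneg A) (norm_nonneg B)]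
  | succ n IH =>
    intro Z hZΛ hZne A hA t ht
    set S := Λ.powerset.filter (fun Z' => ¬Disjoint Z' Z) with hSdef
    set KZ := ∑ Z' ∈ S, hlt h R Z' with hKZdef
    -- K - KZ is the sum over disjoint Z'
    have hKc_eq : K - KZ = ∑ Z' ∈ Λ.powerset.filter (fun Z' => Disjoint Z' Z), hlt h R Z' := by
      have hsplit := Finset.sum_filter_add_sum_filter_not Λ.powerset
        (fun Z' => Disjoint Z' Z) (hlt h R)
      rw [hKdef, Ham, ← hsplit, hKZdef, hSdef]
      abel
    have hKcsa : IsSelfAdjoint (K - KZ) := by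
      rw [hKc_eq]
      exact Finset.sum_induction _ _ (fun a b ha hb => ha.add hb) (IsSelfAdjoint.zero _)
        (fun W _ => hlt_sa W)
    have hcomm : (K - KZ) * A = A * (K - KZ) := by
      rw [hKc_eq, Finset.sum_mul, Finset.mul_sum]
      apply Finset.sum_congr rfl
      intro W hW
      obtain ⟨hWp, hWd⟩ := Finset.mem_filter.mp hW
      exact hloc W Z hWd (hlt h R W) (hlt_mem W (Finset.mem_powerset.mp hWp)) A hA
    -- Duhamel
    have hduh := duhamel K KZ A B hKsa hKcsa hcomm t ht
    -- the zeroth term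
    have hAB : ‖opComm A B‖ ≤ 2 * ‖A‖ * ‖B‖ * Z.card * indYR Y R 0 Z := by
      by_cases hd : Disjoint Z Y
      · have h0 : opComm A B = 0 := sub_eq_zero.mpr (hloc Z Y hd A hA B hB)
        rw [h0, norm_zero]
        apply mul_nonneg _ (indYR_nonneg _ _ _ _)
        positivity
      · rw [indYR, if_pos (Or.inr hd), mul_one]
        have hcard : (1:ℝ) ≤ Z.card := by exact_mod_cast hZne.card_pos
        have := norm_opComm_le A B
        nlinarith [norm_nonneg A, norm_nonneg B, mul_nonneg (norm_nonneg A) (norm_nonneg B)]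
    -- pointwise bound for the integrand
    set F : ℝ → ℝ := fun s =>
      (∑ k ∈ Finset.range n, ((2*C₀)^k / (Nat.factorial k : ℝ) * indYR Y R (k+1) Z) * s^k)
        + ((2*C₀)^n / (Nat.factorial n : ℝ)) * s^n with hFdef
    have hFnn : ∀ s : ℝ, 0 ≤ s → 0 ≤ F s := by
      intro s hs
      rw [hFdef]
      have h1 : ∀ k ∈ Finset.range n,
          0 ≤ ((2*C₀)^k / (Nat.factorial k : ℝ) * indYR Y R (k+1) Z) * s^k := by
        intro k _
        have := indYR_nonneg Y R (k+1) Z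
        have h2 : (0:ℝ) ≤ (2*C₀)^k := pow_nonneg (by linarith) k
        have h3 : (0:ℝ) ≤ s^k := pow_nonneg hs k
        have h4 : (0:ℝ) ≤ (Nat.factorial k : ℝ) := Nat.cast_nonneg _
        positivity
      have h2 : (0:ℝ) ≤ ((2*C₀)^n / (Nat.factorial n : ℝ)) * s^n := by
        have h2 : (0:ℝ) ≤ (2*C₀)^n := pow_nonneg (by linarith) n
        have h3 : (0:ℝ) ≤ s^n := pow_nonneg hs n
        positivity
      exact add_nonneg (Finset.sum_nonneg h1) h2
    have hpoint : ∀ s ∈ Set.Icc (0:ℝ) t,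
        2 * ‖A‖ * ‖opComm (heis K s KZ) B‖
          ≤ (2 * ‖A‖ * (2 * ‖B‖ * (C₀ * Z.card))) * F s := by
      intro s hs
      obtain ⟨hs0, _⟩ := hs
      -- the common polynomial
      set P : ℝ := (∑ k ∈ Finset.range n,
          (2*C₀*s)^k / (Nat.factorial k : ℝ) * indYR Y R (k+1) Z)
        + (2*C₀*s)^n / (Nat.factorial n : ℝ) with hPdef
      have hck : ∀ k : ℕ, (0:ℝ) ≤ (2*C₀*s)^k / (Nat.factorial k : ℝ) := by
        intro k
        have h1 : (0:ℝ) ≤ 2*C₀*s := by nlinarith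
        have h2 := pow_nonneg h1 k
        have h3 : (0:ℝ) ≤ (Nat.factorial k : ℝ) := Nat.cast_nonneg _
        positivity
      have hPnn : 0 ≤ P := by
        rw [hPdef]
        apply add_nonneg
        · apply Finset.sum_nonneg
          intro k _
          exact mul_nonneg (hck k) (indYR_nonneg _ _ _ _)
        · exact hck n
      have hPF : P = F s := by
        rw [hPdef, hFdef]
        congr 1
        · apply Finset.sum_congr rfl
          intro k _
          rw [mul_pow]
          ring
        · rw [mul_pow]; ring
      -- termwise bound
      have hterm : ∀ Z' ∈ S, ‖opComm (heis K s (hlt h R Z')) B‖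
          ≤ (2 * ‖hlt h R Z'‖ * ‖B‖ * Z'.card) * P := by
        intro Z' hZ'S
        obtain ⟨hZ'p, hZ'd⟩ := Finset.mem_filter.mp hZ'S
        have hZ'Λ : Z' ⊆ Λ := Finset.mem_powerset.mp hZ'p
        obtain ⟨x₀, hx₀Z', _⟩ := Finset.not_disjoint_iff.mp hZ'd
        have hZ'ne : Z'.Nonempty := ⟨x₀, hx₀Z'⟩
        have hIH := IH Z' hZ'Λ hZ'ne (hlt h R Z') (hlt_mem Z' hZ'Λ) s hs0
        by_cases hdiam : fdiam Z' < R
        · refine hIH.trans ?_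
          apply mul_le_mul_of_nonneg_left _ (by positivity)
          rw [hPdef]
          apply add_le_add_left
          apply Finset.sum_le_sum
          intro k _
          exact mul_le_mul_of_nonneg_left
            (indYR_step Y Z Z' R hR hYne hdiam hZ'd k) (hck k)
        · have h0 : hlt h R Z' = 0 := by rw [hlt, if_neg hdiam]
          rw [h0]
          simp [heis, opComm]
      -- sum up
      have hsum : ‖opComm (heis K s KZ) B‖
          ≤ ∑ Z' ∈ S, ‖opComm (heis K s (hlt h R Z')) B‖ := by
        rw [hKZdef, opComm_heis_sum]
        exact norm_sum_le _ _
      have hsum2 : ∑ Z' ∈ S, ‖opComm (heis K s (hlt h R Z')) B‖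
          ≤ (2 * ‖B‖ * P) * ∑ Z' ∈ S, ‖hlt h R Z'‖ * Z'.card := by
        calc ∑ Z' ∈ S, ‖opComm (heis K s (hlt h R Z')) B‖
            ≤ ∑ Z' ∈ S, (2 * ‖hlt h R Z'‖ * ‖B‖ * Z'.card) * P := Finset.sum_le_sum hterm
        _ = (2 * ‖B‖ * P) * ∑ Z' ∈ S, ‖hlt h R Z'‖ * Z'.card := by
            rw [Finset.mul_sum]
            apply Finset.sum_congr rfl
            intro Z' _
            ring
      have hsum3 : (2 * ‖B‖ * P) * (∑ Z' ∈ S, ‖hlt h R Z'‖ * Z'.card)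
          ≤ (2 * ‖B‖ * P) * (C₀ * Z.card) := by
        apply mul_le_mul_of_nonneg_left (chain_sum_le Λ Z hZΛ h R C₀ hC₀)
        have := norm_nonneg B
        positivity
      calc 2 * ‖A‖ * ‖opComm (heis K s KZ) B‖
          ≤ 2 * ‖A‖ * ((2 * ‖B‖ * P) * (C₀ * Z.card)) := by
            have hnn : (0:ℝ) ≤ 2 * ‖A‖ := by positivity
            apply mul_le_mul_of_nonneg_left _ hnn
            exact hsum.trans (hsum2.trans hsum3)
      _ = (2 * ‖A‖ * (2 * ‖B‖ * (C₀ * Z.card))) * P := by ring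
      _ = (2 * ‖A‖ * (2 * ‖B‖ * (C₀ * Z.card))) * F s := by rw [hPF]
    -- integrate
    have hFcont : Continuous F := by
      rw [hFdef]
      exact (continuous_finset_sum _ fun k _ => continuous_const.mul (continuous_pow k)).add
        (continuous_const.mul (continuous_pow n))
    have hint : ∫ s in (0:ℝ)..t, 2 * ‖A‖ * ‖opComm (heis K s KZ) B‖
        ≤ ∫ s in (0:ℝ)..t, (2 * ‖A‖ * (2 * ‖B‖ * (C₀ * Z.card))) * F s := by
      apply intervalIntegral.integral_mono_on ht
      · exact (continuous_const.mul (continuous_opComm_heis K B KZ).norm).intervalIntegrable 0 t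
      · exact (continuous_const.mul hFcont).intervalIntegrable 0 t
      · exact hpoint
    -- compute the integral of F
    have hintF : ∫ s in (0:ℝ)..t, F s
        = (∑ k ∈ Finset.range n, ((2*C₀)^k / (Nat.factorial k : ℝ) * indYR Y R (k+1) Z)
            * (t^(k+1) / ((k:ℝ)+1)))
          + ((2*C₀)^n / (Nat.factorial n : ℝ)) * (t^(n+1) / ((n:ℝ)+1)) := by
      rw [hFdef]
      rw [intervalIntegral.integral_add]
      · congr 1
        · rw [intervalIntegral.integral_finset_sum]
          · apply Finset.sum_congr rfl
            intro k _
            rw [intervalIntegral.integral_const_mul, integral_pow]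
            norm_num
          · intro k _
            exact (continuous_const.mul (continuous_pow k)).intervalIntegrable 0 t
        · rw [intervalIntegral.integral_const_mul, integral_pow]
          norm_num
      · exact ((continuous_finset_sum _ fun k _ =>
          continuous_const.mul (continuous_pow k))).intervalIntegrable 0 t
      · exact (continuous_const.mul (continuous_pow n)).intervalIntegrable 0 t
    -- final algebra
    have key_eq : indYR Y R 0 Z + (2*C₀) * ((∑ k ∈ Finset.range n,
          ((2*C₀)^k / (Nat.factorial k : ℝ) * indYR Y R (k+1) Z) * (t^(k+1) / ((k:ℝ)+1)))
          + ((2*C₀)^n / (Nat.factorial n : ℝ)) * (t^(n+1) / ((n:ℝ)+1)))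
        = (∑ k ∈ Finset.range (n+1), (2*C₀*t)^k / (Nat.factorial k : ℝ) * indYR Y R k Z)
          + (2*C₀*t)^(n+1) / (Nat.factorial (n+1) : ℝ) := by
      rw [Finset.sum_range_succ']
      have hterm : ∀ k : ℕ, (2*C₀) * (((2*C₀)^k / (Nat.factorial k : ℝ) * indYR Y R (k+1) Z)
            * (t^(k+1) / ((k:ℝ)+1)))
          = (2*C₀*t)^(k+1) / (Nat.factorial (k+1) : ℝ) * indYR Y R (k+1) Z := by
        intro k
        have hf : ((Nat.factorial k : ℝ)) ≠ 0 := Nat.cast_ne_zero.mpr (Nat.factorial_ne_zero k)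
        have hk : ((k:ℝ) + 1) ≠ 0 := by positivity
        rw [Nat.factorial_succ, mul_pow, mul_pow]
        push_cast
        field_simp
        ring
      have hrem : (2*C₀) * (((2*C₀)^n / (Nat.factorial n : ℝ)) * (t^(n+1) / ((n:ℝ)+1)))
          = (2*C₀*t)^(n+1) / (Nat.factorial (n+1) : ℝ) := by
        have hf : ((Nat.factorial n : ℝ)) ≠ 0 := Nat.cast_ne_zero.mpr (Nat.factorial_ne_zero n)
        have hk : ((n:ℝ) + 1) ≠ 0 := by positivity
        rw [Nat.factorial_succ, mul_pow, mul_pow]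
        push_cast
        field_simp
        ring
      rw [mul_add, Finset.mul_sum]
      simp only [hterm]
      rw [hrem]
      simp only [pow_zero, Nat.factorial_zero, Nat.cast_one]
      ring
    -- put it all together
    calc ‖opComm (heis K t A) B‖
        ≤ ‖opComm A B‖ + ∫ s in (0:ℝ)..t, 2 * ‖A‖ * ‖opComm (heis K s KZ) B‖ := hduh
    _ ≤ 2 * ‖A‖ * ‖B‖ * Z.card * indYR Y R 0 Z
          + ∫ s in (0:ℝ)..t, (2 * ‖A‖ * (2 * ‖B‖ * (C₀ * Z.card))) * F s := by
        have := hint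
        linarith [hAB]
    _ = 2 * ‖A‖ * ‖B‖ * Z.card * indYR Y R 0 Z
          + (2 * ‖A‖ * (2 * ‖B‖ * (C₀ * Z.card))) * ∫ s in (0:ℝ)..t, F s := by
        rw [intervalIntegral.integral_const_mul]
    _ = 2 * ‖A‖ * ‖B‖ * Z.card * (indYR Y R 0 Z + (2*C₀) * ∫ s in (0:ℝ)..t, F s) := by
        ring
    _ = _ := by rw [hintF, key_eq]


end AuxChain

/-- **Theorem A.1** (Lieb-Robinson bound for the finite-range part of the interaction):
if `C₀ = sup_{x∈Λ} Σ_{y∈Λ} Σ_{Z∋x,y} ‖h_Z‖ < ∞` and `v = 2eC₀`, then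
`‖[τ^{(<R)}_{t,Λ}(A), B]‖ ≤ 2‖A‖‖B‖|X| exp(vt − d(X,Y)/R)`. -/
theorem statement_2
    {Ω : Type*} [MetricSpace Ω] [Countable Ω] [DecidableEq Ω]
    {H : Type*} [NormedAddCommGroup H] [InnerProductSpace ℂ H] [CompleteSpace H]
    (Λ : Finset Ω) (𝓐 : Finset Ω → Subalgebra ℂ (H →L[ℂ] H))
    (hmono : ∀ S S' : Finset Ω, S ⊆ S' → 𝓐 S ≤ 𝓐 S')
    (hstar : ∀ S : Finset Ω, ∀ a ∈ 𝓐 S, star a ∈ 𝓐 S)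
    (hloc : ∀ S S' : Finset Ω, Disjoint S S' →
      ∀ a ∈ 𝓐 S, ∀ b ∈ 𝓐 S', a * b = b * a)
    (h : Finset Ω → (H →L[ℂ] H))
    (hmem : ∀ Z : Finset Ω, Z ⊆ Λ → h Z ∈ 𝓐 Z)
    (hsa : ∀ Z : Finset Ω, IsSelfAdjoint (h Z))
    (C₀ : ℝ)
    (hC₀ : ∀ x ∈ Λ, ∑ y ∈ Λ,
      ∑ Z ∈ Λ.powerset.filter (fun Z => x ∈ Z ∧ y ∈ Z), ‖h Z‖ ≤ C₀)
    (R : ℝ) (hR : 0 < R)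
    (X Y : Finset Ω) (hXΛ : X ⊆ Λ) (hYΛ : Y ⊆ Λ) (hXY : 0 < fsetDist X Y)
    (A B : H →L[ℂ] H) (hA : A ∈ 𝓐 X) (hB : B ∈ 𝓐 Y)
    (t : ℝ) (ht : 0 ≤ t) :
    ‖opComm (heis (Ham Λ (hlt h R)) t A) B‖ ≤
      2 * ‖A‖ * ‖B‖ * X.card *
        Real.exp (2 * Real.exp 1 * C₀ * t - fsetDist X Y / R) := by
  -- nonemptiness
  have hXne : X.Nonempty := by
    rcases Finset.eq_empty_or_nonempty X with hX | hX
    · exfalso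
      rw [hX] at hXY
      simp [fsetDist, Real.sInf_empty] at hXY
    · exact hX
  have hYne : Y.Nonempty := by
    rcases Finset.eq_empty_or_nonempty Y with hY | hY
    · exfalso
      rw [hY] at hXY
      simp [fsetDist, Real.sInf_empty] at hXY
    · exact hY
  have hdisj : Disjoint X Y := by
    by_contra hd
    obtain ⟨z, hzX, hzY⟩ := Finset.not_disjoint_iff.mp hd
    have := fsetDist_le X Y hzX hzY
    simp at this
    linarith
  have hC₀nn : 0 ≤ C₀ := by
    obtain ⟨x, hx⟩ := hXne
    refine le_trans ?_ (hC₀ x (hXΛ hx))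
    apply Finset.sum_nonneg
    intro y _
    apply Finset.sum_nonneg
    intro W _
    exact norm_nonneg _
  set d := fsetDist X Y with hd
  set N := ⌈d / R⌉₊ with hN
  -- indicators vanish below N
  have hind : ∀ k ∈ Finset.range N, indYR Y R k X = 0 := by
    intro k hk
    rw [indYR, if_neg]
    push_neg
    constructor
    · have h1 : (k : ℝ) < d / R := Nat.lt_ceil.mp (Finset.mem_range.mp hk)
      have h2 : (k : ℝ) * R < d := (lt_div_iff₀ hR).mp h1
      linarith
    · exact hdisj
  have hmain := lr_induct Λ 𝓐 hloc h hmem hsa C₀ hC₀ hC₀nn R hR Y hYne B hB N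
    X hXΛ hXne A hA t ht
  have hsum0 : (∑ k ∈ Finset.range N,
      (2*C₀*t)^k / (Nat.factorial k : ℝ) * indYR Y R k X) = 0 := by
    apply Finset.sum_eq_zero
    intro k hk
    rw [hind k hk, mul_zero]
  rw [hsum0, zero_add] at hmain
  -- the exponential estimate
  have hx : (0:ℝ) ≤ 2*C₀*t := by positivity
  have hest : (2*C₀*t)^N / (Nat.factorial N : ℝ)
      ≤ Real.exp (2 * Real.exp 1 * C₀ * t - d / R) := by
    have hex : (0:ℝ) ≤ Real.exp 1 * (2*C₀*t) := by positivity
    have h1 : (Real.exp 1 * (2*C₀*t))^N / (Nat.factorial N : ℝ)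
        ≤ Real.exp (Real.exp 1 * (2*C₀*t)) := by
      refine le_trans ?_ (Real.sum_le_exp_of_nonneg hex (N+1))
      refine Finset.single_le_sum (f := fun i => (Real.exp 1 * (2*C₀*t))^i / (Nat.factorial i : ℝ))
        (fun i _ => by positivity) (Finset.self_mem_range_succ N)
    have hEN : (0:ℝ) < (Real.exp 1)^N := by positivity
    have h2 : (2*C₀*t)^N / (Nat.factorial N : ℝ)
        ≤ Real.exp (Real.exp 1 * (2*C₀*t)) / (Real.exp 1)^N := by
      rw [le_div_iff₀ hEN]
      calc (2*C₀*t)^N / (Nat.factorial N : ℝ) * (Real.exp 1)^N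
          = (Real.exp 1 * (2*C₀*t))^N / (Nat.factorial N : ℝ) := by
            rw [mul_pow]; ring
      _ ≤ _ := h1
    refine h2.trans ?_
    rw [Real.exp_one_pow, ← Real.exp_sub]
    apply Real.exp_le_exp.mpr
    have h3 : d / R ≤ (N : ℝ) := Nat.le_ceil _
    have h4 : Real.exp 1 * (2*C₀*t) = 2 * Real.exp 1 * C₀ * t := by ring
    linarith
  calc ‖opComm (heis (Ham Λ (hlt h R)) t A) B‖
      ≤ 2 * ‖A‖ * ‖B‖ * X.card * ((2*C₀*t)^N / (Nat.factorial N : ℝ)) := hmain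
  _ ≤ 2 * ‖A‖ * ‖B‖ * X.card * Real.exp (2 * Real.exp 1 * C₀ * t - d / R) := by
      apply mul_le_mul_of_nonneg_left hest
      positivity
  _ = _ := by rw [hd]
end
end

section
/- Assume Assumption A (i) and (ii) and the volume bound, and set v = 2eC₀. Then there is a constant 𝒞₂ > 0, depending only on the constants C and D of the volume bound, such that for every A ∈ 𝒜_X with X ⊆ Λ, every t ≥ 0, r > 0 and R ≥ 1: Σ_{Z⊆Λ: Z∩X̃_r = ∅} ‖[τ^{(<R)}_{t,Λ}(A), h_Z^{(≥R)}]‖ ≤ 𝒞₂ ‖A‖ |X|² (max(r,R))^D R f(R) e^{vt − r/R}. -/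
noncomputable section

open Complex

variable {Ω : Type*} [MetricSpace Ω]
variable {H : Type*} [NormedAddCommGroup H] [InnerProductSpace ℂ H] [CompleteSpace H]

namespace LRaux

open NormedSpace

set_option linter.unusedSectionVars false

def eexp (T : H →L[ℂ] H) (s : ℝ) : H →L[ℂ] H := NormedSpace.exp ((I * (s:ℝ)) • T)

lemma heis_eq (K : H →L[ℂ] H) (t : ℝ) (A : H →L[ℂ] H) :
    heis K t A = eexp K t * A * eexp K (-t) := by
  simp [heis, eexp, Complex.ofReal_neg, mul_neg, neg_smul]

lemma eexp_mul_neg (T : H →L[ℂ] H) (s : ℝ) : eexp T s * eexp T (-s) = 1 := by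
  letI : NormedAlgebra ℚ (H →L[ℂ] H) := NormedAlgebra.restrictScalars ℚ ℂ _
  rw [eexp, eexp, ← NormedSpace.exp_add_of_commute]
  · norm_num [← NormedSpace.exp_zero (𝔸 := H →L[ℂ] H), ← add_smul]
  · exact ((Commute.refl T).smul_left _).smul_right _

lemma eexp_neg_mul (T : H →L[ℂ] H) (s : ℝ) : eexp T (-s) * eexp T s = 1 := by
  simpa using eexp_mul_neg T (-s)

lemma norm_eexp_le (T : H →L[ℂ] H) (hT : IsSelfAdjoint T) (s : ℝ) : ‖eexp T s‖ ≤ 1 := by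
  have hstar : star (eexp T s) = eexp T (-s) := by
    have he : (I * ((-s : ℝ) : ℂ)) • T = star ((I * (s:ℝ)) • T) := by
      rw [star_smul, hT.star_eq, star_mul']
      simp
    rw [eexp, eexp, he, star_exp]
  have h1 : star (eexp T s) * eexp T s = 1 := by rw [hstar]; exact eexp_neg_mul T s
  have h2 : ‖star (eexp T s) * eexp T s‖ = ‖eexp T s‖ * ‖eexp T s‖ :=
    CStarRing.norm_star_mul_self
  rw [h1] at h2
  have : ‖(1 : H →L[ℂ] H)‖ ≤ 1 := by
    rw [ContinuousLinearMap.one_def]; exact ContinuousLinearMap.norm_id_le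
  nlinarith [norm_nonneg (eexp T s)]


lemma hasDerivAt_eexp (T : H →L[ℂ] H) (s : ℝ) :
    HasDerivAt (fun u : ℝ => eexp T u) ((I • T) * eexp T s) s := by
  have hfun : (fun u : ℝ => eexp T u) = fun u : ℝ => NormedSpace.exp ((u : ℂ) • (I • T)) := by
    funext u
    rw [eexp, smul_smul, mul_comm]
  have h1 : HasDerivAt (fun z : ℂ => NormedSpace.exp (z • (I • T)))
      ((I • T) * NormedSpace.exp (((s:ℝ):ℂ) • (I • T))) ((s:ℝ):ℂ) :=
    hasDerivAt_exp_smul_const' (I • T) ((s:ℝ):ℂ)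
  have h2 : HasDerivAt (fun u : ℝ => ((u:ℝ):ℂ)) 1 s := Complex.ofRealCLM.hasDerivAt
  have h3 := HasDerivAt.scomp (x := s) h1 h2
  rw [one_smul] at h3
  have h4 : HasDerivAt (fun u : ℝ => NormedSpace.exp ((u:ℂ) • (I • T)))
      ((I • T) * NormedSpace.exp (((s:ℝ):ℂ) • (I • T))) s := h3
  have h5 : eexp T s = NormedSpace.exp (((s:ℝ):ℂ) • (I • T)) := by
    rw [eexp, smul_smul, mul_comm]
  rw [hfun, h5]
  exact h4

lemma hasDerivAt_eexp_neg (T : H →L[ℂ] H) (s : ℝ) :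
    HasDerivAt (fun u : ℝ => eexp T (-u)) (-((I • T) * eexp T (-s))) s := by
  have := HasDerivAt.scomp (x := s) (hasDerivAt_eexp T (-s)) (hasDerivAt_neg s)
  simpa [Function.comp_def] using this

lemma continuous_eexp (T : H →L[ℂ] H) : Continuous fun s : ℝ => eexp T s := by
  letI : NormedAlgebra ℚ (H →L[ℂ] H) := NormedAlgebra.restrictScalars ℚ ℂ _
  exact NormedSpace.exp_continuous.comp
    (((continuous_const.mul Complex.continuous_ofReal)).smul (continuous_const : Continuous fun _ : ℝ => T))

lemma norm_opComm_le (A B : H →L[ℂ] H) : ‖opComm A B‖ ≤ 2 * ‖A‖ * ‖B‖ := by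
  rw [opComm]
  calc ‖A * B - B * A‖ ≤ ‖A * B‖ + ‖B * A‖ := norm_sub_le _ _
  _ ≤ ‖A‖ * ‖B‖ + ‖B‖ * ‖A‖ := add_le_add (norm_mul_le _ _) (norm_mul_le _ _)
  _ = 2 * ‖A‖ * ‖B‖ := by ring

lemma norm_heis_le (K : H →L[ℂ] H) (hK : IsSelfAdjoint K) (t : ℝ) (A : H →L[ℂ] H) :
    ‖heis K t A‖ ≤ ‖A‖ := by
  rw [heis_eq]
  calc ‖eexp K t * A * eexp K (-t)‖ ≤ ‖eexp K t * A‖ * ‖eexp K (-t)‖ := norm_mul_le _ _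
  _ ≤ ‖eexp K t‖ * ‖A‖ * ‖eexp K (-t)‖ :=
      mul_le_mul_of_nonneg_right (norm_mul_le _ _) (norm_nonneg _)
  _ ≤ 1 * ‖A‖ * 1 := by
      have h1 := norm_eexp_le K hK t
      have h2 := norm_eexp_le K hK (-t)
      have := norm_nonneg A
      nlinarith [norm_nonneg (eexp K t), norm_nonneg (eexp K (-t)), norm_nonneg (eexp K t * A),
        mul_le_mul_of_nonneg_right h1 this]
  _ = ‖A‖ := by ring


lemma eexp_zero (T : H →L[ℂ] H) : eexp T 0 = 1 := by
  simp [eexp, NormedSpace.exp_zero]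

lemma duhamel (K1 K2 A' B : H →L[ℂ] H) (hK1 : IsSelfAdjoint K1) (hK2 : IsSelfAdjoint K2)
    (hcomm : Commute A' K2) {t : ℝ} (ht : 0 ≤ t) (ψ : ℝ → ℝ) (hψc : Continuous ψ)
    (hψ : ∀ s ∈ Set.Icc (0:ℝ) t, ‖opComm (heis (K1 + K2) s K1) B‖ ≤ ψ s) :
    ‖opComm (heis (K1 + K2) t A') B‖ ≤ ‖opComm A' B‖ + 2 * ‖A'‖ * ∫ s in (0:ℝ)..t, ψ s := by
  set M : H →L[ℂ] H := K1 + K2 with hM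
  have hMsa : IsSelfAdjoint M := hK1.add hK2
  set P : ℝ → (H →L[ℂ] H) := fun s => eexp K2 s * eexp M (-s) with hP
  set Q : ℝ → (H →L[ℂ] H) := fun s => eexp M s * eexp K2 (-s) with hQ
  set Bt : ℝ → (H →L[ℂ] H) := fun s => P s * B * Q s with hBt
  set G : ℝ → (H →L[ℂ] H) := fun s => opComm A' (Bt s) with hG
  set Gd : ℝ → (H →L[ℂ] H) :=
    fun s => opComm A' (I • (P s * opComm B (heis M s K1) * Q s)) with hGd
  -- cancellation helpers
  have can1 : ∀ (T : H →L[ℂ] H) (s : ℝ) (X : H →L[ℂ] H), eexp T s * (eexp T (-s) * X) = X := by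
    intro T s X; rw [← mul_assoc, eexp_mul_neg, one_mul]
  have can2 : ∀ (T : H →L[ℂ] H) (s : ℝ) (X : H →L[ℂ] H), eexp T (-s) * (eexp T s * X) = X := by
    intro T s X; rw [← mul_assoc, eexp_neg_mul, one_mul]
  have swapA : ∀ (s : ℝ), Commute A' (eexp K2 s) := fun s =>
    (hcomm.smul_right _).exp_right
  have swapA1 : ∀ (s : ℝ) (X : H →L[ℂ] H), eexp K2 s * (A' * X) = A' * (eexp K2 s * X) := by
    intro s X; rw [← mul_assoc, ← (swapA s).eq, mul_assoc]
  have swapA2 : ∀ (s : ℝ), eexp K2 s * A' = A' * eexp K2 s := fun s => ((swapA s).symm).eq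
  -- step 1: the key conjugation identity
  have key1 : ∀ s : ℝ, opComm (heis M s A') B = Q s * G s * P s := by
    intro s
    simp only [hG, hQ, hP, hBt, opComm, heis_eq, mul_sub, sub_mul, mul_assoc, can1, can2,
      swapA1, swapA2, eexp_mul_neg, eexp_neg_mul, mul_one, one_mul]
  -- step 2: derivative of P and Q
  have hPd : ∀ s : ℝ, HasDerivAt P (eexp K2 s * -(I • K1) * eexp M (-s)) s := by
    intro s
    have h := (hasDerivAt_eexp K2 s).mul (hasDerivAt_eexp_neg M s)
    have hswap : (I • K2) * eexp K2 s = eexp K2 s * (I • K2) :=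
      ((((Commute.refl K2).smul_left I).smul_right _).exp_right :
        Commute (I • K2) (eexp K2 s)).eq
    have h9 : I • K2 - I • M = -(I • K1) := by
      rw [hM, ← smul_sub, show K2 - (K1 + K2) = -K1 by abel, smul_neg]
    have heq : eexp K2 s * -(I • K1) * eexp M (-s)
        = I • K2 * eexp K2 s * eexp M (-s) + eexp K2 s * -(I • M * eexp M (-s)) := by
      rw [← h9, hswap]
      simp only [sub_mul, mul_sub, mul_neg, mul_assoc]
      abel
    rw [hP, heq]
    exact h
  have hQd : ∀ s : ℝ, HasDerivAt Q (eexp M s * (I • K1) * eexp K2 (-s)) s := by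
    intro s
    have h := (hasDerivAt_eexp M s).mul (hasDerivAt_eexp_neg K2 s)
    have hswap : (I • M) * eexp M s = eexp M s * (I • M) :=
      ((((Commute.refl M).smul_left I).smul_right _).exp_right :
        Commute (I • M) (eexp M s)).eq
    have h9 : I • M - I • K2 = I • K1 := by
      rw [hM, ← smul_sub, show K1 + K2 - K2 = K1 by abel]
    have heq : eexp M s * (I • K1) * eexp K2 (-s)
        = I • M * eexp M s * eexp K2 (-s) + eexp M s * -(I • K2 * eexp K2 (-s)) := by
      rw [← h9, hswap]
      simp only [sub_mul, mul_sub, mul_neg, mul_assoc]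
      abel
    rw [hQ, heq]
    exact h
  -- step 3: derivative of G
  have hGderiv : ∀ s : ℝ, HasDerivAt G (Gd s) s := by
    intro s
    have hBtd : HasDerivAt Bt
        (eexp K2 s * -(I • K1) * eexp M (-s) * B * Q s
          + P s * B * (eexp M s * (I • K1) * eexp K2 (-s))) s :=
      ((hPd s).mul_const B).mul (hQd s)
    have hBtd' : HasDerivAt Bt (I • (P s * opComm B (heis M s K1) * Q s)) s := by
      convert hBtd using 1
      simp only [hP, hQ, opComm, heis_eq, smul_mul_assoc, mul_smul_comm, mul_assoc,
        neg_mul, mul_neg, smul_neg, mul_sub, sub_mul, smul_sub, can1, can2]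
      abel
    have := (hBtd'.const_mul A').sub (hBtd'.mul_const A')
    simpa [hG, hGd, opComm, mul_sub, sub_mul, Pi.sub_def] using this
  -- step 4: continuity of Gd
  have hGdc : Continuous Gd := by
    have hc : ∀ T : H →L[ℂ] H, Continuous fun s : ℝ => eexp T (-s) :=
      fun T => (continuous_eexp T).comp continuous_neg
    have hPc : Continuous P := (continuous_eexp K2).mul (hc M)
    have hQc : Continuous Q := (continuous_eexp M).mul (hc K2)
    have hheis : Continuous fun s => heis M s K1 := by
      simp only [heis_eq]
      exact ((continuous_eexp M).mul continuous_const).mul (hc M)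
    have hoc : Continuous fun s => opComm B (heis M s K1) :=
      (continuous_const.mul hheis).sub (hheis.mul continuous_const)
    have : Continuous fun s => I • (P s * opComm B (heis M s K1) * Q s) :=
      (((hPc.mul hoc).mul hQc)).const_smul I
    exact (continuous_const.mul this).sub (this.mul continuous_const)
  -- step 5: FTC and the norm bound
  have hFTC : G t - G 0 = ∫ s in (0:ℝ)..t, Gd s := by
    rw [intervalIntegral.integral_eq_sub_of_hasDerivAt (fun s _ => hGderiv s)
      (hGdc.intervalIntegrable 0 t)]
  have hnormGd : ∀ s ∈ Set.Icc (0:ℝ) t, ‖Gd s‖ ≤ 2 * ‖A'‖ * ψ s := by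
    intro s hs
    have h1 : ‖Gd s‖ ≤ 2 * ‖A'‖ * ‖I • (P s * opComm B (heis M s K1) * Q s)‖ :=
      norm_opComm_le _ _
    have h2 : ‖I • (P s * opComm B (heis M s K1) * Q s)‖
        = ‖P s * opComm B (heis M s K1) * Q s‖ := by
      rw [norm_smul, Complex.norm_I, one_mul]
    have hψs : ‖opComm B (heis M s K1)‖ ≤ ψ s := by
      have : opComm B (heis M s K1) = -(opComm (heis M s K1) B) := by
        simp [opComm]
      rw [this, norm_neg]; exact hψ s hs
    have hψnn : (0:ℝ) ≤ ψ s := le_trans (norm_nonneg _) hψs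
    have hPn : ‖P s‖ ≤ 1 := by
      calc ‖P s‖ ≤ ‖eexp K2 s‖ * ‖eexp M (-s)‖ := norm_mul_le _ _
      _ ≤ 1 * 1 := mul_le_mul (norm_eexp_le _ hK2 _) (norm_eexp_le _ hMsa _)
            (norm_nonneg _) zero_le_one
      _ = 1 := one_mul 1
    have hQn : ‖Q s‖ ≤ 1 := by
      calc ‖Q s‖ ≤ ‖eexp M s‖ * ‖eexp K2 (-s)‖ := norm_mul_le _ _
      _ ≤ 1 * 1 := mul_le_mul (norm_eexp_le _ hMsa _) (norm_eexp_le _ hK2 _)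
            (norm_nonneg _) zero_le_one
      _ = 1 := one_mul 1
    have h3 : ‖P s * opComm B (heis M s K1) * Q s‖ ≤ ψ s := by
      calc ‖P s * opComm B (heis M s K1) * Q s‖
          ≤ ‖P s * opComm B (heis M s K1)‖ * ‖Q s‖ := norm_mul_le _ _
        _ ≤ ‖P s‖ * ‖opComm B (heis M s K1)‖ * ‖Q s‖ :=
            mul_le_mul_of_nonneg_right (norm_mul_le _ _) (norm_nonneg _)
        _ ≤ 1 * ψ s * 1 :=
            mul_le_mul (mul_le_mul hPn hψs (norm_nonneg _) zero_le_one) hQn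
              (norm_nonneg _) (by positivity)
        _ = ψ s := by ring
    calc ‖Gd s‖ ≤ 2 * ‖A'‖ * ‖I • (P s * opComm B (heis M s K1) * Q s)‖ := h1
    _ = 2 * ‖A'‖ * ‖P s * opComm B (heis M s K1) * Q s‖ := by rw [h2]
    _ ≤ 2 * ‖A'‖ * ψ s := by
        have := norm_nonneg A'
        nlinarith
  have hintle : ‖∫ s in (0:ℝ)..t, Gd s‖ ≤ 2 * ‖A'‖ * ∫ s in (0:ℝ)..t, ψ s := by
    calc ‖∫ s in (0:ℝ)..t, Gd s‖ ≤ ∫ s in (0:ℝ)..t, ‖Gd s‖ :=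
          intervalIntegral.norm_integral_le_integral_norm ht
    _ ≤ ∫ s in (0:ℝ)..t, 2 * ‖A'‖ * ψ s := by
        apply intervalIntegral.integral_mono_on ht
        · exact (hGdc.norm).intervalIntegrable 0 t
        · exact ((continuous_const.mul hψc).intervalIntegrable 0 t)
        · exact hnormGd
    _ = 2 * ‖A'‖ * ∫ s in (0:ℝ)..t, ψ s := by
        rw [← intervalIntegral.integral_const_mul]
  have hG0 : G 0 = opComm A' B := by
    simp [hG, hBt, hP, hQ, eexp_zero, neg_zero]
  have hGt : ‖opComm (heis M t A') B‖ ≤ ‖G t‖ := by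
    rw [key1 t]
    have hPn : ‖P t‖ ≤ 1 := by
      calc ‖P t‖ ≤ ‖eexp K2 t‖ * ‖eexp M (-t)‖ := norm_mul_le _ _
      _ ≤ 1 * 1 := mul_le_mul (norm_eexp_le _ hK2 _) (norm_eexp_le _ hMsa _)
            (norm_nonneg _) zero_le_one
      _ = 1 := one_mul 1
    have hQn : ‖Q t‖ ≤ 1 := by
      calc ‖Q t‖ ≤ ‖eexp M t‖ * ‖eexp K2 (-t)‖ := norm_mul_le _ _
      _ ≤ 1 * 1 := mul_le_mul (norm_eexp_le _ hMsa _) (norm_eexp_le _ hK2 _)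
            (norm_nonneg _) zero_le_one
      _ = 1 := one_mul 1
    calc ‖Q t * G t * P t‖ ≤ ‖Q t * G t‖ * ‖P t‖ := norm_mul_le _ _
    _ ≤ ‖Q t‖ * ‖G t‖ * ‖P t‖ := mul_le_mul_of_nonneg_right (norm_mul_le _ _) (norm_nonneg _)
    _ ≤ 1 * ‖G t‖ * 1 :=
        mul_le_mul (mul_le_mul hQn le_rfl (norm_nonneg _) zero_le_one) hPn
          (norm_nonneg _) (by positivity)
    _ = ‖G t‖ := by ring
  calc ‖opComm (heis M t A') B‖ ≤ ‖G t‖ := hGt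
  _ ≤ ‖G 0‖ + ‖G t - G 0‖ := by
      conv_lhs => rw [show G t = G 0 + (G t - G 0) by abel]
      exact norm_add_le _ _
  _ ≤ ‖opComm A' B‖ + 2 * ‖A'‖ * ∫ s in (0:ℝ)..t, ψ s := by
      rw [hFTC, hG0]
      exact add_le_add le_rfl hintle


variable [DecidableEq Ω]

/-- Linked-chain sums with endpoint condition. -/
def chainSum (Λ : Finset Ω) (Φ : Finset Ω → (H →L[ℂ] H)) (nB : ℝ) (Z₀ : Finset Ω) :
    ℕ → Finset Ω → ℝ
  | 0, S => if (S ∩ Z₀).Nonempty then 2 * nB else 0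
  | n+1, S => ∑ Z' ∈ Λ.powerset.filter (fun Z' => (Z' ∩ S).Nonempty),
      2 * ‖Φ Z'‖ * chainSum Λ Φ nB Z₀ n Z'

/-- Linked-chain sums without endpoint condition. -/
def chainSumBar (Λ : Finset Ω) (Φ : Finset Ω → (H →L[ℂ] H)) (nB : ℝ) :
    ℕ → Finset Ω → ℝ
  | 0, _ => 2 * nB
  | n+1, S => ∑ Z' ∈ Λ.powerset.filter (fun Z' => (Z' ∩ S).Nonempty),
      2 * ‖Φ Z'‖ * chainSumBar Λ Φ nB n Z'

lemma chainSum_nonneg (Λ : Finset Ω) (Φ : Finset Ω → (H →L[ℂ] H)) {nB : ℝ} (hnB : 0 ≤ nB)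
    (Z₀ : Finset Ω) : ∀ n S, 0 ≤ chainSum Λ Φ nB Z₀ n S := by
  intro n
  induction n with
  | zero =>
      intro S
      rw [chainSum]
      split
      · linarith
      · exact le_rfl
  | succ n ih =>
      intro S
      rw [chainSum]
      exact Finset.sum_nonneg fun Z' _ => mul_nonneg (by positivity) (ih Z')

lemma chainSum_le_chainSumBar (Λ : Finset Ω) (Φ : Finset Ω → (H →L[ℂ] H)) {nB : ℝ}
    (hnB : 0 ≤ nB) (Z₀ : Finset Ω) : ∀ n S, chainSum Λ Φ nB Z₀ n S ≤ chainSumBar Λ Φ nB n S := by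
  intro n
  induction n with
  | zero =>
      intro S
      rw [chainSum, chainSumBar]
      split
      · exact le_rfl
      · linarith
  | succ n ih =>
      intro S
      rw [chainSum, chainSumBar]
      exact Finset.sum_le_sum fun Z' _ =>
        mul_le_mul_of_nonneg_left (ih Z') (by positivity)

lemma chainSum_eq_zero (Λ : Finset Ω) (Φ : Finset Ω → (H →L[ℂ] H)) (nB : ℝ)
    (Z₀ : Finset Ω) (R : ℝ) (hdiam : ∀ Z, Φ Z ≠ 0 → fdiam Z < R) :
    ∀ (n : ℕ) (S : Finset Ω), (∀ x ∈ S, ∀ z ∈ Z₀, (n : ℝ) * R ≤ dist x z) →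
      (n = 0 → S ∩ Z₀ = ∅) → chainSum Λ Φ nB Z₀ n S = 0 := by
  intro n
  induction n with
  | zero =>
      intro S _ h0
      have hne : ¬(S ∩ Z₀).Nonempty := by
        rw [h0 rfl]
        exact Finset.not_nonempty_empty
      rw [chainSum, if_neg hne]
  | succ n ih =>
      intro S hfar _
      rw [chainSum]
      apply Finset.sum_eq_zero
      intro Z' hZ'
      rw [Finset.mem_filter] at hZ'
      by_cases hΦ0 : Φ Z' = 0
      · simp [hΦ0]
      obtain ⟨y, hy⟩ := hZ'.2
      rw [Finset.mem_inter] at hy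
      have hstrict : ∀ x' ∈ Z', ∀ z ∈ Z₀, (n : ℝ) * R < dist x' z := by
        intro x' hx' z hz
        have h1 : ((n : ℝ) + 1) * R ≤ dist y z := by
          have := hfar y hy.2 z hz
          push_cast at this ⊢
          linarith
        have h2 : dist y x' ≤ fdiam Z' :=
          Metric.dist_le_diam_of_mem Z'.finite_toSet.isBounded (by simpa using hy.1)
            (by simpa using hx')
        have h3 : fdiam Z' < R := hdiam Z' hΦ0
        have h4 := dist_triangle y x' z
        have h5 : dist y x' + dist x' z ≥ dist y z := by
          calc dist y z ≤ dist y x' + dist x' z := h4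
          _ = _ := rfl
        nlinarith
      have hzero : chainSum Λ Φ nB Z₀ n Z' = 0 := by
        apply ih Z'
        · intro x' hx' z hz
          exact le_of_lt (hstrict x' hx' z hz)
        · intro hn
          subst hn
          rw [Finset.eq_empty_iff_forall_notMem]
          intro a ha
          rw [Finset.mem_inter] at ha
          have hc := hstrict a ha.1 a ha.2
          simp [dist_self] at hc
      rw [hzero, mul_zero]

lemma chainSumBar_le (Λ : Finset Ω) (Φ : Finset Ω → (H →L[ℂ] H)) {nB : ℝ} (hnB : 0 ≤ nB)
    {C₀ : ℝ} (hC₀ : 0 ≤ C₀)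
    (hsum : ∀ S : Finset Ω, S ⊆ Λ →
      ∑ Z' ∈ Λ.powerset.filter (fun Z' => (Z' ∩ S).Nonempty), ‖Φ Z'‖ * (Z'.card : ℝ)
        ≤ C₀ * (S.card : ℝ)) :
    ∀ (N : ℕ) (S : Finset Ω), S ⊆ Λ →
      chainSumBar Λ Φ nB (N + 1) S ≤ 2 * nB * (2 * C₀) ^ (N + 1) * (S.card : ℝ) := by
  intro N
  induction N with
  | zero =>
      intro S hS
      rw [chainSumBar]
      calc ∑ Z' ∈ Λ.powerset.filter (fun Z' => (Z' ∩ S).Nonempty),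
            2 * ‖Φ Z'‖ * chainSumBar Λ Φ nB 0 Z'
          ≤ ∑ Z' ∈ Λ.powerset.filter (fun Z' => (Z' ∩ S).Nonempty),
            (4 * nB) * (‖Φ Z'‖ * (Z'.card : ℝ)) := by
            apply Finset.sum_le_sum
            intro Z' hZ'
            rw [Finset.mem_filter] at hZ'
            have hcard : (1 : ℝ) ≤ (Z'.card : ℝ) := by
              have : Z'.Nonempty := by
                obtain ⟨y, hy⟩ := hZ'.2
                exact ⟨y, (Finset.mem_inter.mp hy).1⟩
              exact_mod_cast Finset.card_pos.mpr this
            rw [chainSumBar]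
            have hn := norm_nonneg (Φ Z')
            nlinarith [mul_nonneg (mul_nonneg hnB hn) (sub_nonneg.mpr hcard)]
        _ = (4 * nB) * ∑ Z' ∈ Λ.powerset.filter (fun Z' => (Z' ∩ S).Nonempty),
              ‖Φ Z'‖ * (Z'.card : ℝ) := by rw [Finset.mul_sum]
        _ ≤ (4 * nB) * (C₀ * (S.card : ℝ)) := by
            apply mul_le_mul_of_nonneg_left (hsum S hS) (by positivity)
        _ = 2 * nB * (2 * C₀) ^ (0 + 1) * (S.card : ℝ) := by ring
  | succ N ih =>
      intro S hS
      rw [chainSumBar]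
      calc ∑ Z' ∈ Λ.powerset.filter (fun Z' => (Z' ∩ S).Nonempty),
            2 * ‖Φ Z'‖ * chainSumBar Λ Φ nB (N + 1) Z'
          ≤ ∑ Z' ∈ Λ.powerset.filter (fun Z' => (Z' ∩ S).Nonempty),
            (4 * nB * (2 * C₀) ^ (N + 1)) * (‖Φ Z'‖ * (Z'.card : ℝ)) := by
            apply Finset.sum_le_sum
            intro Z' hZ'
            rw [Finset.mem_filter] at hZ'
            have hZ'Λ : Z' ⊆ Λ := Finset.mem_powerset.mp hZ'.1
            have h1 := ih Z' hZ'Λ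
            have h2 : (0 : ℝ) ≤ 2 * ‖Φ Z'‖ := by positivity
            calc 2 * ‖Φ Z'‖ * chainSumBar Λ Φ nB (N + 1) Z'
                ≤ 2 * ‖Φ Z'‖ * (2 * nB * (2 * C₀) ^ (N + 1) * (Z'.card : ℝ)) :=
                  mul_le_mul_of_nonneg_left h1 h2
              _ = (4 * nB * (2 * C₀) ^ (N + 1)) * (‖Φ Z'‖ * (Z'.card : ℝ)) := by ring
        _ = (4 * nB * (2 * C₀) ^ (N + 1)) * ∑ Z' ∈ Λ.powerset.filter
              (fun Z' => (Z' ∩ S).Nonempty), ‖Φ Z'‖ * (Z'.card : ℝ) := by rw [Finset.mul_sum]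
        _ ≤ (4 * nB * (2 * C₀) ^ (N + 1)) * (C₀ * (S.card : ℝ)) := by
            apply mul_le_mul_of_nonneg_left (hsum S hS) (by positivity)
        _ = 2 * nB * (2 * C₀) ^ (N + 1 + 1) * (S.card : ℝ) := by ring


lemma sum_weighted_le (Λ : Finset Ω) (h' Φ : Finset Ω → (H →L[ℂ] H)) (C₀ : ℝ)
    (hA2 : ∀ x ∈ Λ, ∑ y ∈ Λ,
      ∑ Z ∈ Λ.powerset.filter (fun Z => x ∈ Z ∧ y ∈ Z), ‖h' Z‖ ≤ C₀)
    (hΦ : ∀ Z, ‖Φ Z‖ ≤ ‖h' Z‖) :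
    ∀ S : Finset Ω, S ⊆ Λ →
      ∑ Z' ∈ Λ.powerset.filter (fun Z' => (Z' ∩ S).Nonempty), ‖Φ Z'‖ * (Z'.card : ℝ)
        ≤ C₀ * (S.card : ℝ) := by
  intro S hS
  have step1 : ∑ Z' ∈ Λ.powerset.filter (fun Z' => (Z' ∩ S).Nonempty), ‖Φ Z'‖ * (Z'.card : ℝ)
      ≤ ∑ Z' ∈ Λ.powerset.filter (fun Z' => (Z' ∩ S).Nonempty),
          ∑ _x ∈ Z' ∩ S, ‖h' Z'‖ * (Z'.card : ℝ) := by
    apply Finset.sum_le_sum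
    intro Z' hZ'
    rw [Finset.mem_filter] at hZ'
    rw [Finset.sum_const, nsmul_eq_mul]
    have h1 : (1 : ℝ) ≤ ((Z' ∩ S).card : ℝ) := by exact_mod_cast Finset.card_pos.mpr hZ'.2
    have h2 : ‖Φ Z'‖ ≤ ‖h' Z'‖ := hΦ Z'
    have h3 : (0 : ℝ) ≤ (Z'.card : ℝ) := by positivity
    nlinarith [norm_nonneg (h' Z'), mul_nonneg (mul_nonneg (sub_nonneg.mpr h1)
      (norm_nonneg (h' Z'))) h3]
  have step2 : ∑ Z' ∈ Λ.powerset.filter (fun Z' => (Z' ∩ S).Nonempty),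
        ∑ _x ∈ Z' ∩ S, ‖h' Z'‖ * (Z'.card : ℝ)
      = ∑ x ∈ S, ∑ Z' ∈ (Λ.powerset.filter (fun Z' => (Z' ∩ S).Nonempty)).filter
          (fun Z' => x ∈ Z'), ‖h' Z'‖ * (Z'.card : ℝ) := by
    apply Finset.sum_comm'
    intro Z' x
    simp only [Finset.mem_filter, Finset.mem_inter, Finset.mem_powerset]
    constructor
    · rintro ⟨⟨h1, h2⟩, h3, h4⟩
      exact ⟨⟨⟨h1, h2⟩, h3⟩, h4⟩
    · rintro ⟨⟨⟨h1, h2⟩, h3⟩, h4⟩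
      exact ⟨⟨h1, h2⟩, h3, h4⟩
  have step3 : ∀ x ∈ S,
      ∑ Z' ∈ (Λ.powerset.filter (fun Z' => (Z' ∩ S).Nonempty)).filter
          (fun Z' => x ∈ Z'), ‖h' Z'‖ * (Z'.card : ℝ) ≤ C₀ := by
    intro x hx
    have hxΛ : x ∈ Λ := hS hx
    have hsub : ∑ Z' ∈ (Λ.powerset.filter (fun Z' => (Z' ∩ S).Nonempty)).filter
          (fun Z' => x ∈ Z'), ‖h' Z'‖ * (Z'.card : ℝ)
        ≤ ∑ Z' ∈ Λ.powerset.filter (fun Z' => x ∈ Z'), ‖h' Z'‖ * (Z'.card : ℝ) := by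
      apply Finset.sum_le_sum_of_subset_of_nonneg
      · intro Z' hZ'
        simp only [Finset.mem_filter] at hZ' ⊢
        exact ⟨hZ'.1.1, hZ'.2⟩
      · intro Z' _ _
        positivity
    refine hsub.trans ?_
    have hkey : ∑ Z' ∈ Λ.powerset.filter (fun Z' => x ∈ Z'), ‖h' Z'‖ * (Z'.card : ℝ)
        = ∑ y ∈ Λ, ∑ Z ∈ Λ.powerset.filter (fun Z => x ∈ Z ∧ y ∈ Z), ‖h' Z‖ := by
      have hcard : ∀ Z' ∈ Λ.powerset.filter (fun Z' => x ∈ Z'),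
          ‖h' Z'‖ * (Z'.card : ℝ) = ∑ y ∈ Λ, if y ∈ Z' then ‖h' Z'‖ else 0 := by
        intro Z' hZ'
        rw [Finset.mem_filter, Finset.mem_powerset] at hZ'
        rw [Finset.sum_ite_mem, Finset.sum_const, nsmul_eq_mul,
          Finset.inter_eq_right.mpr hZ'.1]
        ring
      rw [Finset.sum_congr rfl hcard, Finset.sum_comm]
      apply Finset.sum_congr rfl
      intro y _
      rw [Finset.sum_filter, Finset.sum_filter]
      apply Finset.sum_congr rfl
      intro Z _
      by_cases hxZ : x ∈ Z <;> by_cases hyZ : y ∈ Z <;> simp [hxZ, hyZ]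
    rw [hkey]
    exact hA2 x hxΛ
  calc ∑ Z' ∈ Λ.powerset.filter (fun Z' => (Z' ∩ S).Nonempty), ‖Φ Z'‖ * (Z'.card : ℝ)
      ≤ _ := step1
    _ = _ := step2
    _ ≤ ∑ _x ∈ S, C₀ := Finset.sum_le_sum step3
    _ = C₀ * (S.card : ℝ) := by rw [Finset.sum_const, nsmul_eq_mul]; ring


lemma integral_poly (t : ℝ) (n : ℕ) (c : ℝ) :
    ∫ s in (0:ℝ)..t, s ^ n / (n.factorial : ℝ) * c
      = t ^ (n + 1) / ((n + 1).factorial : ℝ) * c := by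
  have hfun : (fun s : ℝ => s ^ n / (n.factorial : ℝ) * c)
      = fun s : ℝ => (c / (n.factorial : ℝ)) * s ^ n := by
    funext s; ring
  rw [hfun, intervalIntegral.integral_const_mul, integral_pow]
  have h1 : ((n + 1).factorial : ℝ) = ((n : ℝ) + 1) * (n.factorial : ℝ) := by
    rw [Nat.factorial_succ]; push_cast; ring
  have h2 : (n.factorial : ℝ) ≠ 0 := by positivity
  have h3 : ((n : ℝ) + 1) ≠ 0 := by positivity
  field_simp [h1]
  rw [h1, zero_pow (Nat.succ_ne_zero n)]
  ring

lemma heis_sum {ι : Type*} (K : H →L[ℂ] H) (s : ℝ) (t : Finset ι) (F : ι → (H →L[ℂ] H)) :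
    heis K s (∑ i ∈ t, F i) = ∑ i ∈ t, heis K s (F i) := by
  rw [heis, Finset.mul_sum, Finset.sum_mul]
  rfl

lemma isSelfAdjoint_sum {ι : Type*} (t : Finset ι) (F : ι → (H →L[ℂ] H))
    (hF : ∀ i ∈ t, IsSelfAdjoint (F i)) : IsSelfAdjoint (∑ i ∈ t, F i) := by
  rw [IsSelfAdjoint, star_sum]
  exact Finset.sum_congr rfl fun i hi => hF i hi

lemma series_bound (Λ : Finset Ω) (𝓐 : Finset Ω → Subalgebra ℂ (H →L[ℂ] H))
    (Φ : Finset Ω → (H →L[ℂ] H)) (B : H →L[ℂ] H) (Z₀ : Finset Ω)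
    (hloc : ∀ S S' : Finset Ω, Disjoint S S' → ∀ a ∈ 𝓐 S, ∀ b ∈ 𝓐 S', a * b = b * a)
    (hΦmem : ∀ Z : Finset Ω, Z ⊆ Λ → Φ Z ∈ 𝓐 Z)
    (hΦsa : ∀ Z, IsSelfAdjoint (Φ Z))
    (hB : B ∈ 𝓐 Z₀) (N : ℕ) :
    ∀ S : Finset Ω, S ⊆ Λ → ∀ A' ∈ 𝓐 S, ∀ t : ℝ, 0 ≤ t →
      ‖opComm (heis (Ham Λ Φ) t A') B‖ ≤
        ‖A'‖ * ((∑ n ∈ Finset.range N,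
            t ^ n / (n.factorial : ℝ) * chainSum Λ Φ ‖B‖ Z₀ n S)
          + t ^ N / (N.factorial : ℝ) * chainSumBar Λ Φ ‖B‖ N S) := by
  have hHam : IsSelfAdjoint (Ham Λ Φ) :=
    isSelfAdjoint_sum _ _ fun Z _ => hΦsa Z
  induction N with
  | zero =>
      intro S hS A' hA' t ht
      simp only [Finset.range_zero, Finset.sum_empty, zero_add, pow_zero,
        Nat.factorial_zero, Nat.cast_one]
      rw [chainSumBar]
      calc ‖opComm (heis (Ham Λ Φ) t A') B‖
          ≤ 2 * ‖heis (Ham Λ Φ) t A'‖ * ‖B‖ := norm_opComm_le _ _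
        _ ≤ 2 * ‖A'‖ * ‖B‖ := by
            have := norm_heis_le (Ham Λ Φ) hHam t A'
            have := norm_nonneg B
            nlinarith
        _ = ‖A'‖ * (1 / 1 * (2 * ‖B‖)) := by ring
  | succ N ih =>
      intro S hS A' hA' t ht
      set filt := Λ.powerset.filter (fun Z' => (Z' ∩ S).Nonempty) with hfilt
      set K1 : H →L[ℂ] H := ∑ Z' ∈ filt, Φ Z' with hK1
      set K2 : H →L[ℂ] H :=
        ∑ Z' ∈ Λ.powerset.filter (fun Z' => ¬(Z' ∩ S).Nonempty), Φ Z' with hK2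
      have hsplit : K1 + K2 = Ham Λ Φ := by
        rw [hK1, hK2, hfilt, Ham]
        exact Finset.sum_filter_add_sum_filter_not _ _ _
      have hK1sa : IsSelfAdjoint K1 := isSelfAdjoint_sum _ _ fun Z _ => hΦsa Z
      have hK2sa : IsSelfAdjoint K2 := isSelfAdjoint_sum _ _ fun Z _ => hΦsa Z
      have hcomm : Commute A' K2 := by
        rw [hK2]
        apply Commute.sum_right
        intro Z' hZ'
        rw [Finset.mem_filter] at hZ'
        have hdisj : Disjoint Z' S := by
          rw [Finset.disjoint_iff_inter_eq_empty]
          exact Finset.not_nonempty_iff_eq_empty.mp hZ'.2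
        exact (hloc S Z' hdisj.symm A' hA' (Φ Z')
          (hΦmem Z' (Finset.mem_powerset.mp hZ'.1)))
      set ψ : ℝ → ℝ := fun s => ∑ Z' ∈ filt, ‖Φ Z'‖ *
        ((∑ n ∈ Finset.range N, s ^ n / (n.factorial : ℝ) * chainSum Λ Φ ‖B‖ Z₀ n Z')
          + s ^ N / (N.factorial : ℝ) * chainSumBar Λ Φ ‖B‖ N Z') with hψdef
      have hψc : Continuous ψ := by
        apply continuous_finset_sum
        intro Z' _
        apply Continuous.mul continuous_const
        apply Continuous.add
        · apply continuous_finset_sum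
          intro n _
          exact (((continuous_pow n).div_const _).mul continuous_const)
        · exact (((continuous_pow N).div_const _).mul continuous_const)
      have hψ : ∀ s ∈ Set.Icc (0:ℝ) t, ‖opComm (heis (K1 + K2) s K1) B‖ ≤ ψ s := by
        intro s hs
        rw [hsplit, hK1, heis_sum]
        have hexpand : opComm (∑ Z' ∈ filt, heis (Ham Λ Φ) s (Φ Z')) B
            = ∑ Z' ∈ filt, opComm (heis (Ham Λ Φ) s (Φ Z')) B := by
          rw [opComm, Finset.sum_mul, Finset.mul_sum, ← Finset.sum_sub_distrib]
          rfl
        rw [hexpand]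
        calc ‖∑ Z' ∈ filt, opComm (heis (Ham Λ Φ) s (Φ Z')) B‖
            ≤ ∑ Z' ∈ filt, ‖opComm (heis (Ham Λ Φ) s (Φ Z')) B‖ := norm_sum_le _ _
          _ ≤ ψ s := by
              apply Finset.sum_le_sum
              intro Z' hZ'
              rw [Finset.mem_filter] at hZ'
              exact ih Z' (Finset.mem_powerset.mp hZ'.1) (Φ Z')
                (hΦmem Z' (Finset.mem_powerset.mp hZ'.1)) s hs.1
      have hdu := duhamel K1 K2 A' B hK1sa hK2sa hcomm ht ψ hψc hψ
      rw [hsplit] at hdu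
      -- compute the integral of ψ
      have hint : ∫ s in (0:ℝ)..t, ψ s = ∑ Z' ∈ filt, ‖Φ Z'‖ *
          ((∑ n ∈ Finset.range N,
            t ^ (n+1) / ((n+1).factorial : ℝ) * chainSum Λ Φ ‖B‖ Z₀ n Z')
            + t ^ (N+1) / ((N+1).factorial : ℝ) * chainSumBar Λ Φ ‖B‖ N Z') := by
        rw [hψdef]
        rw [intervalIntegral.integral_finset_sum]
        · apply Finset.sum_congr rfl
          intro Z' _
          rw [intervalIntegral.integral_const_mul]
          congr 1
          rw [intervalIntegral.integral_add]
          · congr 1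
            · rw [intervalIntegral.integral_finset_sum]
              · exact Finset.sum_congr rfl fun n _ => integral_poly t n _
              · intro n _
                exact (((continuous_pow n).div_const _).mul continuous_const).intervalIntegrable 0 t
            · exact integral_poly t N _
          · apply Continuous.intervalIntegrable
            apply continuous_finset_sum
            intro n _
            exact (((continuous_pow n).div_const _).mul continuous_const)
          · exact (((continuous_pow N).div_const _).mul continuous_const).intervalIntegrable 0 t
        · intro Z' _
          apply Continuous.intervalIntegrable
          apply Continuous.mul continuous_const
          apply Continuous.add
          · apply continuous_finset_sum
            intro n _
            exact (((continuous_pow n).div_const _).mul continuous_const)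
          · exact (((continuous_pow N).div_const _).mul continuous_const)
      -- the zeroth order term
      have hzero : ‖opComm A' B‖ ≤ ‖A'‖ * chainSum Λ Φ ‖B‖ Z₀ 0 S := by
        rw [chainSum]
        by_cases hd : (S ∩ Z₀).Nonempty
        · rw [if_pos hd]
          have := norm_opComm_le A' B
          linarith
        · rw [if_neg hd]
          have hdisj : Disjoint S Z₀ := by
            rw [Finset.disjoint_iff_inter_eq_empty]
            exact Finset.not_nonempty_iff_eq_empty.mp hd
          have : opComm A' B = 0 := by
            rw [opComm, hloc S Z₀ hdisj A' hA' B hB, sub_self]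
          rw [this, norm_zero, mul_zero]
      -- reorganize
      have hreorg : 2 * ‖A'‖ * ∫ s in (0:ℝ)..t, ψ s
          = ‖A'‖ * ((∑ n ∈ Finset.range N,
              t ^ (n+1) / ((n+1).factorial : ℝ) * chainSum Λ Φ ‖B‖ Z₀ (n+1) S)
            + t ^ (N+1) / ((N+1).factorial : ℝ) * chainSumBar Λ Φ ‖B‖ (N+1) S) := by
        rw [hint]
        have hcs : ∀ n, chainSum Λ Φ ‖B‖ Z₀ (n+1) S
            = ∑ Z' ∈ filt, 2 * ‖Φ Z'‖ * chainSum Λ Φ ‖B‖ Z₀ n Z' := fun n => by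
          rw [chainSum, hfilt]
        have hbs : chainSumBar Λ Φ ‖B‖ (N+1) S
            = ∑ Z' ∈ filt, 2 * ‖Φ Z'‖ * chainSumBar Λ Φ ‖B‖ N Z' := by
          rw [chainSumBar, hfilt]
        simp only [hcs, hbs, mul_add, Finset.mul_sum, Finset.sum_add_distrib]
        rw [Finset.sum_comm]
        congr 1
        · apply Finset.sum_congr rfl
          intro n _
          apply Finset.sum_congr rfl
          intro Z' _
          ring
        · apply Finset.sum_congr rfl
          intro Z' _
          ring
      calc ‖opComm (heis (Ham Λ Φ) t A') B‖
          ≤ ‖opComm A' B‖ + 2 * ‖A'‖ * ∫ s in (0:ℝ)..t, ψ s := hdu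
        _ ≤ ‖A'‖ * chainSum Λ Φ ‖B‖ Z₀ 0 S + ‖A'‖ * ((∑ n ∈ Finset.range N,
              t ^ (n+1) / ((n+1).factorial : ℝ) * chainSum Λ Φ ‖B‖ Z₀ (n+1) S)
            + t ^ (N+1) / ((N+1).factorial : ℝ) * chainSumBar Λ Φ ‖B‖ (N+1) S) := by
            rw [← hreorg]
            exact add_le_add hzero le_rfl
        _ = ‖A'‖ * ((∑ n ∈ Finset.range (N+1),
              t ^ n / (n.factorial : ℝ) * chainSum Λ Φ ‖B‖ Z₀ n S)
            + t ^ (N+1) / ((N+1).factorial : ℝ) * chainSumBar Λ Φ ‖B‖ (N+1) S) := by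
            rw [Finset.sum_range_succ']
            simp only [pow_zero, Nat.factorial_zero, Nat.cast_one]
            ring


lemma LR_bound (Λ : Finset Ω) (𝓐 : Finset Ω → Subalgebra ℂ (H →L[ℂ] H))
    (Φ : Finset Ω → (H →L[ℂ] H)) (A B : H →L[ℂ] H) (X Z₀ : Finset Ω)
    (hloc : ∀ S S' : Finset Ω, Disjoint S S' → ∀ a ∈ 𝓐 S, ∀ b ∈ 𝓐 S', a * b = b * a)
    (hΦmem : ∀ Z : Finset Ω, Z ⊆ Λ → Φ Z ∈ 𝓐 Z)
    (hΦsa : ∀ Z, IsSelfAdjoint (Φ Z))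
    (hA : A ∈ 𝓐 X) (hX : X ⊆ Λ) (hB : B ∈ 𝓐 Z₀)
    {R : ℝ} (hR : 0 < R) (hdiam : ∀ Z, Φ Z ≠ 0 → fdiam Z < R)
    {C₀ : ℝ} (hC₀ : 0 ≤ C₀)
    (hsum : ∀ S : Finset Ω, S ⊆ Λ →
      ∑ Z' ∈ Λ.powerset.filter (fun Z' => (Z' ∩ S).Nonempty), ‖Φ Z'‖ * (Z'.card : ℝ)
        ≤ C₀ * (S.card : ℝ))
    {δ : ℝ} (hδ0 : 0 ≤ δ) (hδ : ∀ x ∈ X, ∀ z ∈ Z₀, δ ≤ dist x z)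
    (hXZ : X ∩ Z₀ = ∅) {t : ℝ} (ht : 0 ≤ t) :
    ‖opComm (heis (Ham Λ Φ) t A) B‖ ≤
      2 * ‖A‖ * ‖B‖ * (X.card : ℝ) * Real.exp (2 * Real.exp 1 * C₀ * t - δ / R) := by
  set E : ℝ := 2 * ‖B‖ * (X.card : ℝ) * Real.exp (2 * Real.exp 1 * C₀ * t - δ / R) with hE
  have hnB : (0:ℝ) ≤ ‖B‖ := norm_nonneg B
  -- partial sums of the chain series are bounded by E
  have claim1 : ∀ N : ℕ, ∑ n ∈ Finset.range N,
      t ^ n / (n.factorial : ℝ) * chainSum Λ Φ ‖B‖ Z₀ n X ≤ E := by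
    intro N
    have hterm : ∀ n ∈ Finset.range N, t ^ n / (n.factorial : ℝ) * chainSum Λ Φ ‖B‖ Z₀ n X
        ≤ Real.exp (-(δ/R)) * ((2 * Real.exp 1 * C₀ * t) ^ n / (n.factorial : ℝ))
          * (2 * ‖B‖ * (X.card : ℝ)) := by
      intro n _
      by_cases hfar : (n : ℝ) * R ≤ δ
      · have hz : chainSum Λ Φ ‖B‖ Z₀ n X = 0 := by
          apply chainSum_eq_zero Λ Φ ‖B‖ Z₀ R hdiam n X
          · intro x hx z hz
            exact le_trans hfar (hδ x hx z hz)
          · intro _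
            exact hXZ
        rw [hz, mul_zero]
        positivity
      · push_neg at hfar
        have hn1 : δ / R < (n : ℝ) := (div_lt_iff₀ hR).mpr hfar
        obtain ⟨m, rfl⟩ : ∃ m, n = m + 1 := by
          cases n with
          | zero =>
              exfalso
              simp only [Nat.cast_zero] at hn1
              have := div_nonneg hδ0 hR.le
              linarith
          | succ m => exact ⟨m, rfl⟩
        have hbound : chainSum Λ Φ ‖B‖ Z₀ (m+1) X ≤ 2 * ‖B‖ * (2*C₀)^(m+1) * (X.card : ℝ) :=
          le_trans (chainSum_le_chainSumBar Λ Φ hnB Z₀ (m+1) X)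
            (chainSumBar_le Λ Φ hnB hC₀ hsum m X hX)
        have hfac : (0:ℝ) < ((m+1).factorial : ℝ) := by positivity
        have he1 : (1:ℝ) ≤ Real.exp (-(δ/R)) * Real.exp ((m:ℝ)+1) := by
          rw [← Real.exp_add]
          apply Real.one_le_exp
          push_cast at hn1
          linarith
        have hexp : (2 * Real.exp 1 * C₀ * t) ^ (m+1)
            = Real.exp ((m:ℝ)+1) * (2 * C₀ * t) ^ (m+1) := by
          rw [show 2 * Real.exp 1 * C₀ * t = Real.exp 1 * (2 * C₀ * t) by ring, mul_pow,
            ← Real.exp_one_rpow ((m:ℝ)+1)]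
          rw [Real.exp_one_rpow]
          congr 1
          rw [← Real.exp_nat_mul]
          push_cast
          ring_nf
        have htn : (0:ℝ) ≤ t ^ (m+1) / ((m+1).factorial : ℝ) := by positivity
        calc t ^ (m+1) / ((m+1).factorial : ℝ) * chainSum Λ Φ ‖B‖ Z₀ (m+1) X
            ≤ t ^ (m+1) / ((m+1).factorial : ℝ) * (2 * ‖B‖ * (2*C₀)^(m+1) * (X.card : ℝ)) :=
              mul_le_mul_of_nonneg_left hbound htn
          _ = (2 * C₀ * t) ^ (m+1) / ((m+1).factorial : ℝ) * (2 * ‖B‖ * (X.card : ℝ)) := by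
              rw [mul_pow]
              ring
          _ ≤ Real.exp (-(δ/R)) * Real.exp ((m:ℝ)+1) * ((2 * C₀ * t) ^ (m+1)
                / ((m+1).factorial : ℝ) * (2 * ‖B‖ * (X.card : ℝ))) := by
              apply le_mul_of_one_le_left _ he1
              positivity
          _ = Real.exp (-(δ/R)) * ((2 * Real.exp 1 * C₀ * t) ^ (m+1)
                / ((m+1).factorial : ℝ)) * (2 * ‖B‖ * (X.card : ℝ)) := by
              rw [hexp]
              ring
    calc ∑ n ∈ Finset.range N, t ^ n / (n.factorial : ℝ) * chainSum Λ Φ ‖B‖ Z₀ n X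
        ≤ ∑ n ∈ Finset.range N, Real.exp (-(δ/R)) * ((2 * Real.exp 1 * C₀ * t) ^ n
            / (n.factorial : ℝ)) * (2 * ‖B‖ * (X.card : ℝ)) := Finset.sum_le_sum hterm
      _ = Real.exp (-(δ/R)) * (2 * ‖B‖ * (X.card : ℝ)) * ∑ n ∈ Finset.range N,
            (2 * Real.exp 1 * C₀ * t) ^ n / (n.factorial : ℝ) := by
          rw [Finset.mul_sum]
          apply Finset.sum_congr rfl
          intro n _
          ring
      _ ≤ Real.exp (-(δ/R)) * (2 * ‖B‖ * (X.card : ℝ)) * Real.exp (2 * Real.exp 1 * C₀ * t) := by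
          apply mul_le_mul_of_nonneg_left _ (by positivity)
          exact Real.sum_le_exp_of_nonneg (by positivity) N
      _ = E := by
          rw [hE, Real.exp_sub, Real.exp_neg]
          field_simp
  -- apply the series bound for each N and take the limit
  have claim2 : ∀ N : ℕ, ‖opComm (heis (Ham Λ Φ) t A) B‖
      ≤ ‖A‖ * E + ‖A‖ * (2 * ‖B‖ * (X.card : ℝ)) * ((2*C₀*t) ^ (N+1) / ((N+1).factorial : ℝ)) := by
    intro N
    have h := series_bound Λ 𝓐 Φ B Z₀ hloc hΦmem hΦsa hB (N+1) X hX A hA t ht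
    have hbar : chainSumBar Λ Φ ‖B‖ (N+1) X ≤ 2 * ‖B‖ * (2*C₀)^(N+1) * (X.card : ℝ) :=
      chainSumBar_le Λ Φ hnB hC₀ hsum N X hX
    have hrem : t ^ (N+1) / ((N+1).factorial : ℝ) * chainSumBar Λ Φ ‖B‖ (N+1) X
        ≤ (2 * ‖B‖ * (X.card : ℝ)) * ((2*C₀*t) ^ (N+1) / ((N+1).factorial : ℝ)) := by
      calc t ^ (N+1) / ((N+1).factorial : ℝ) * chainSumBar Λ Φ ‖B‖ (N+1) X
          ≤ t ^ (N+1) / ((N+1).factorial : ℝ) * (2 * ‖B‖ * (2*C₀)^(N+1) * (X.card : ℝ)) :=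
            mul_le_mul_of_nonneg_left hbar (by positivity)
        _ = (2 * ‖B‖ * (X.card : ℝ)) * ((2*C₀*t) ^ (N+1) / ((N+1).factorial : ℝ)) := by
            rw [mul_pow]
            ring
    calc ‖opComm (heis (Ham Λ Φ) t A) B‖
        ≤ ‖A‖ * ((∑ n ∈ Finset.range (N+1),
            t ^ n / (n.factorial : ℝ) * chainSum Λ Φ ‖B‖ Z₀ n X)
          + t ^ (N+1) / ((N+1).factorial : ℝ) * chainSumBar Λ Φ ‖B‖ (N+1) X) := h
      _ ≤ ‖A‖ * (E + (2 * ‖B‖ * (X.card : ℝ)) * ((2*C₀*t) ^ (N+1) / ((N+1).factorial : ℝ))) := by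
          apply mul_le_mul_of_nonneg_left _ (norm_nonneg A)
          exact add_le_add (claim1 (N+1)) hrem
      _ = ‖A‖ * E + ‖A‖ * (2 * ‖B‖ * (X.card : ℝ))
            * ((2*C₀*t) ^ (N+1) / ((N+1).factorial : ℝ)) := by ring
  have hlim : Filter.Tendsto (fun N : ℕ => ‖A‖ * E + ‖A‖ * (2 * ‖B‖ * (X.card : ℝ))
      * ((2*C₀*t) ^ (N+1) / ((N+1).factorial : ℝ))) Filter.atTop (nhds (‖A‖ * E + 0)) := by
    apply Filter.Tendsto.add tendsto_const_nhds
    rw [show (0:ℝ) = ‖A‖ * (2 * ‖B‖ * (X.card : ℝ)) * 0 by ring]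
    apply Filter.Tendsto.const_mul
    have h0 := FloorSemiring.tendsto_pow_div_factorial_atTop (2*C₀*t)
    exact h0.comp (Filter.tendsto_add_atTop_nat 1)
  have hfinal : ‖opComm (heis (Ham Λ Φ) t A) B‖ ≤ ‖A‖ * E + 0 :=
    ge_of_tendsto hlim (Filter.Eventually.of_forall claim2)
  rw [add_zero] at hfinal
  calc ‖opComm (heis (Ham Λ Φ) t A) B‖ ≤ ‖A‖ * E := hfinal
    _ = 2 * ‖A‖ * ‖B‖ * (X.card : ℝ) * Real.exp (2 * Real.exp 1 * C₀ * t - δ / R) := by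
        rw [hE]
        ring


lemma rpow_exp_bound (D x : ℝ) (hD : 0 < D) (hx : 0 < x) :
    x ^ D ≤ (2*D) ^ D * Real.exp (x/2 - D) := by
  rw [Real.rpow_def_of_pos hx, Real.rpow_def_of_pos (by positivity), ← Real.exp_add,
    Real.exp_le_exp]
  have h := Real.log_le_sub_one_of_pos (show (0:ℝ) < x/(2*D) by positivity)
  rw [Real.log_div (ne_of_gt hx) (by positivity)] at h
  have h2 : x/(2*D)*D = x/2 := by field_simp
  nlinarith [mul_le_mul_of_nonneg_right h hD.le]

lemma geom_exp_le (K : ℕ) : ∑ j ∈ Finset.range K, (Real.exp (-(1:ℝ)/2))^j ≤ 3 := by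
  have h32 : (3:ℝ)/2 ≤ Real.exp (1/2) := by nlinarith [Real.add_one_le_exp (1/2:ℝ)]
  have hq1 : Real.exp (-(1:ℝ)/2) ≤ 2/3 := by
    rw [show (-(1:ℝ)/2) = -(1/2) by ring, Real.exp_neg]
    calc (Real.exp (1/2))⁻¹ ≤ ((3:ℝ)/2)⁻¹ :=
          inv_anti₀ (by norm_num) h32
      _ = 2/3 := by norm_num
  have hqpos : (0:ℝ) ≤ Real.exp (-(1:ℝ)/2) := (Real.exp_pos _).le
  calc ∑ j ∈ Finset.range K, (Real.exp (-(1:ℝ)/2))^j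
      ≤ ∑ j ∈ Finset.range K, ((2:ℝ)/3)^j :=
        Finset.sum_le_sum fun j _ => pow_le_pow_left₀ hqpos hq1 j
    _ ≤ 3 := by
        rw [geom_sum_eq (by norm_num : (2/3:ℝ) ≠ 1) K]
        have h1 : (0:ℝ) ≤ (2/3:ℝ)^K := by positivity
        rw [div_le_iff_of_neg (by norm_num : (2/3:ℝ) - 1 < 0)]
        linarith

lemma shell_bound (C D : ℝ) (hC : 0 < C) (hD : 0 < D) (g : ℝ → ℝ)
    (hfin : ∀ (x : Ω) (ρ : ℝ), 0 ≤ ρ → ({y : Ω | dist x y ≤ ρ}).Finite)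
    (hg : ∀ (x : Ω) (ρ : ℝ), 0 ≤ ρ → (({y : Ω | dist x y ≤ ρ}).ncard : ℝ) ≤ g ρ)
    (Λ : Finset Ω) (x : Ω) {r R : ℝ} (hr : 0 < r) (hR : 1 ≤ R)
    (hgC : ∀ ρ : ℝ, 0 ≤ ρ → g ρ ≤ C * (1 + ρ) ^ D) :
    ∑ y ∈ Λ.filter (fun y => r < dist x y), Real.exp (-(dist x y / R))
      ≤ C * (2*D)^D * Real.exp (3/2 - D) * 3 * (max r R) ^ D * Real.exp (-(r/R)) := by
  have hR0 : (0:ℝ) < R := lt_of_lt_of_le one_pos hR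
  set M : ℝ := max r R with hM
  have hM1 : (1:ℝ) ≤ M := le_trans hR (le_max_right r R)
  have hrM : r ≤ M := le_max_left r R
  have hRM : R ≤ M := le_max_right r R
  set T := Λ.filter (fun y => r < dist x y) with hT
  set k : Ω → ℕ := fun y => ⌊(dist x y - r)/R⌋₊ with hk
  set K := T.sup k + 1 with hK
  -- pointwise bound
  have hpt : ∀ y ∈ T, Real.exp (-(dist x y / R))
      ≤ Real.exp (-(r/R)) * Real.exp (-((k y : ℝ))) := by
    intro y hy
    rw [hT, Finset.mem_filter] at hy
    have hd : r < dist x y := hy.2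
    have hfl : ((k y : ℝ)) ≤ (dist x y - r)/R :=
      Nat.floor_le (div_nonneg (by linarith) hR0.le)
    rw [le_div_iff₀ hR0] at hfl
    rw [← Real.exp_add, Real.exp_le_exp]
    have h3 : (r + (k y:ℝ)*R)/R = r/R + (k y:ℝ) := by field_simp
    have h2 : (r + (k y:ℝ)*R)/R ≤ dist x y / R := by
      apply (div_le_div_iff_of_pos_right hR0).mpr
      linarith
    rw [h3] at h2
    linarith
  -- fiber cardinality bound
  have hcard : ∀ j : ℕ, (((T.filter (fun y => k y = j)).card : ℝ))
      ≤ C * ((j:ℝ)+3)^D * M^D := by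
    intro j
    have hρ : (0:ℝ) ≤ r + ((j:ℝ)+1)*R := by positivity
    have hsub : ↑(T.filter (fun y => k y = j)) ⊆ {y : Ω | dist x y ≤ r + ((j:ℝ)+1)*R} := by
      intro y hy
      simp only [Finset.coe_filter, Set.mem_setOf_eq, hT, Finset.mem_filter] at hy
      obtain ⟨⟨_, hd⟩, hkj⟩ := hy
      have hlt : (dist x y - r)/R < (j:ℝ) + 1 := by
        rw [← hkj]
        have := Nat.lt_floor_add_one ((dist x y - r)/R)
        exact_mod_cast this
      rw [div_lt_iff₀ hR0] at hlt
      simp only [Set.mem_setOf_eq]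
      nlinarith
    have h1 : ((T.filter (fun y => k y = j)).card : ℕ)
        = (↑(T.filter (fun y => k y = j)) : Set Ω).ncard := (Set.ncard_coe_finset _).symm
    have h2 : (↑(T.filter (fun y => k y = j)) : Set Ω).ncard
        ≤ ({y : Ω | dist x y ≤ r + ((j:ℝ)+1)*R}).ncard :=
      Set.ncard_le_ncard hsub (hfin x _ hρ)
    have h4 : (1:ℝ) + (r + ((j:ℝ)+1)*R) ≤ ((j:ℝ)+3) * M := by
      have : ((j:ℝ)+1)*R ≤ ((j:ℝ)+1)*M := mul_le_mul_of_nonneg_left hRM (by positivity)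
      nlinarith
    calc (((T.filter (fun y => k y = j)).card : ℝ))
        ≤ (({y : Ω | dist x y ≤ r + ((j:ℝ)+1)*R}).ncard : ℝ) := by
          rw [show ((T.filter (fun y => k y = j)).card : ℝ)
            = (((T.filter (fun y => k y = j)).card : ℕ) : ℝ) from rfl, h1]
          exact_mod_cast h2
      _ ≤ g (r + ((j:ℝ)+1)*R) := hg x _ hρ
      _ ≤ C * (1 + (r + ((j:ℝ)+1)*R)) ^ D := hgC _ hρ
      _ ≤ C * (((j:ℝ)+3) * M) ^ D := by
          apply mul_le_mul_of_nonneg_left _ hC.le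
          apply Real.rpow_le_rpow (by positivity) h4 hD.le
      _ = C * ((j:ℝ)+3)^D * M^D := by
          rw [Real.mul_rpow (by positivity) (by positivity), mul_assoc]
  -- assemble
  calc ∑ y ∈ T, Real.exp (-(dist x y / R))
      ≤ ∑ y ∈ T, Real.exp (-(r/R)) * Real.exp (-((k y : ℝ))) := Finset.sum_le_sum hpt
    _ = Real.exp (-(r/R)) * ∑ y ∈ T, Real.exp (-((k y : ℝ))) := by rw [Finset.mul_sum]
    _ = Real.exp (-(r/R)) * ∑ j ∈ Finset.range K, ∑ y ∈ T.filter (fun y => k y = j),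
          Real.exp (-((k y : ℝ))) := by
        congr 1
        rw [Finset.sum_fiberwise_of_maps_to (fun y hy =>
          Finset.mem_range.mpr (Nat.lt_succ_of_le (Finset.le_sup hy)))]
    _ = Real.exp (-(r/R)) * ∑ j ∈ Finset.range K,
          ((T.filter (fun y => k y = j)).card : ℝ) * Real.exp (-(j:ℝ)) := by
        congr 1
        apply Finset.sum_congr rfl
        intro j _
        rw [Finset.sum_congr rfl (fun y hy => by
          rw [(Finset.mem_filter.mp hy).2]), Finset.sum_const, nsmul_eq_mul]
    _ ≤ Real.exp (-(r/R)) * ∑ j ∈ Finset.range K,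
          (C * (2*D)^D * Real.exp (3/2 - D) * M^D) * (Real.exp (-(1:ℝ)/2))^j := by
        apply mul_le_mul_of_nonneg_left _ (Real.exp_pos _).le
        apply Finset.sum_le_sum
        intro j _
        have hb := rpow_exp_bound D ((j:ℝ)+3) hD (by positivity)
        have hsplit : Real.exp (((j:ℝ)+3)/2 - D) * Real.exp (-(j:ℝ))
            = Real.exp (3/2 - D) * (Real.exp (-(1:ℝ)/2))^j := by
          rw [← Real.exp_nat_mul, ← Real.exp_add, ← Real.exp_add]
          congr 1
          push_cast
          ring
        calc ((T.filter (fun y => k y = j)).card : ℝ) * Real.exp (-(j:ℝ))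
            ≤ (C * ((j:ℝ)+3)^D * M^D) * Real.exp (-(j:ℝ)) :=
              mul_le_mul_of_nonneg_right (hcard j) (Real.exp_pos _).le
          _ ≤ (C * ((2*D)^D * Real.exp (((j:ℝ)+3)/2 - D)) * M^D) * Real.exp (-(j:ℝ)) := by
              have hMD : (0:ℝ) ≤ M^D := by positivity
              apply mul_le_mul_of_nonneg_right _ (Real.exp_pos _).le
              apply mul_le_mul_of_nonneg_right _ hMD
              exact mul_le_mul_of_nonneg_left hb hC.le
          _ = (C * (2*D)^D * Real.exp (3/2 - D) * M^D) * (Real.exp (-(1:ℝ)/2))^j := by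
              rw [show C * ((2*D)^D * Real.exp (((j:ℝ)+3)/2 - D)) * M^D * Real.exp (-(j:ℝ))
                = C * (2*D)^D * M^D * (Real.exp (((j:ℝ)+3)/2 - D) * Real.exp (-(j:ℝ))) by ring,
                hsplit]
              ring
    _ ≤ Real.exp (-(r/R)) * ((C * (2*D)^D * Real.exp (3/2 - D) * M^D) * 3) := by
        apply mul_le_mul_of_nonneg_left _ (Real.exp_pos _).le
        rw [← Finset.mul_sum]
        apply mul_le_mul_of_nonneg_left (geom_exp_le K) (by positivity)
    _ = C * (2*D)^D * Real.exp (3/2 - D) * 3 * M ^ D * Real.exp (-(r/R)) := by ring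

end LRaux

open LRaux in
/-- **Lemma B.1** (bound on the third term of Lemma 3.1): under Assumption A and the volume
bound with constants `C`, `D`, there is `𝒞₂ > 0` depending only on `C` and `D` such that
`Σ_{Z∩X̃_r = ∅} ‖[τ^{(<R)}_{t,Λ}(A), h_Z^{(≥R)}]‖
   ≤ 𝒞₂ ‖A‖ |X|² (max(r,R))^D R f(R) e^{vt − r/R}` with `v = 2eC₀`. -/
theorem statement_3 (C D : ℝ) (hC : 0 < C) (hD : 0 < D) :
    ∃ C₂ : ℝ, 0 < C₂ ∧
    ∀ (Ω : Type) (_ : MetricSpace Ω) (_ : Countable Ω) (_ : DecidableEq Ω)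
      (H : Type) (_ : NormedAddCommGroup H) (_ : InnerProductSpace ℂ H) (_ : CompleteSpace H)
      (Λ : Finset Ω) (𝓐 : Finset Ω → Subalgebra ℂ (H →L[ℂ] H))
      (h : Finset Ω → (H →L[ℂ] H)) (f g : ℝ → ℝ) (C₀ : ℝ)
      (X : Finset Ω) (A : H →L[ℂ] H) (t r R : ℝ),
      -- the local algebras
      (∀ S S' : Finset Ω, S ⊆ S' → 𝓐 S ≤ 𝓐 S') →
      (∀ S : Finset Ω, ∀ a ∈ 𝓐 S, star a ∈ 𝓐 S) →
      (∀ S S' : Finset Ω, Disjoint S S' → ∀ a ∈ 𝓐 S, ∀ b ∈ 𝓐 S', a * b = b * a) →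
      (∀ Z : Finset Ω, Z ⊆ Λ → h Z ∈ 𝓐 Z) →
      (∀ Z : Finset Ω, IsSelfAdjoint (h Z)) →
      -- Assumption A (i)
      (AntitoneOn f (Set.Ici 0)) → (∀ R', 0 ≤ R' → 0 ≤ f R') →
      (∀ R', 0 ≤ R' → ∀ x ∈ Λ,
        ∑ Z ∈ Λ.powerset.filter (fun Z => x ∈ Z ∧ R' ≤ fdiam Z), ‖h Z‖ ≤ f R') →
      -- Assumption A (ii)
      (∀ x ∈ Λ, ∑ y ∈ Λ,
        ∑ Z ∈ Λ.powerset.filter (fun Z => x ∈ Z ∧ y ∈ Z), ‖h Z‖ ≤ C₀) →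
      -- volume bound with constants C and D
      (MonotoneOn g (Set.Ici 0)) →
      (∀ (x : Ω) (ρ : ℝ), 0 ≤ ρ → ({y : Ω | dist x y ≤ ρ}).Finite) →
      (∀ (x : Ω) (ρ : ℝ), 0 ≤ ρ → (({y : Ω | dist x y ≤ ρ}).ncard : ℝ) ≤ g ρ) →
      (∀ ρ : ℝ, 0 ≤ ρ → g ρ ≤ C * (1 + ρ) ^ D) →
      X ⊆ Λ → A ∈ 𝓐 X → 0 ≤ t → 0 < r → 1 ≤ R →
      ∑ Z ∈ Λ.powerset.filter (fun Z => Z ∩ nbhd Λ X r = ∅),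
          ‖opComm (heis (Ham Λ (hlt h R)) t A) (hge h R Z)‖ ≤
        C₂ * ‖A‖ * (X.card : ℝ) ^ 2 * max r R ^ D * R * f R *
          Real.exp (2 * Real.exp 1 * C₀ * t - r / R) := by
  refine ⟨6 * C * (2*D)^D * Real.exp (3/2 - D), by positivity, ?_⟩
  intro Ω _ _ _ H _ _ _ Λ 𝓐 h f g C₀ X A t r R
  intro halg hstar hloc hmem hsa hfanti hf0 hAi hAii hgmono hfin hg hgC hXΛ hA ht hr hR1
  have hR0 : (0:ℝ) < R := lt_of_lt_of_le one_pos hR1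
  set C₂ : ℝ := 6 * C * (2*D)^D * Real.exp (3/2 - D) with hC₂def
  have hC₂pos : (0:ℝ) < C₂ := by rw [hC₂def]; positivity
  have hfR : (0:ℝ) ≤ f R := hf0 R (by linarith)
  set v : ℝ := 2 * Real.exp 1 * C₀ * t with hv
  set filt := Λ.powerset.filter (fun Z => Z ∩ nbhd Λ X r = ∅) with hfilt
  -- basic facts about hge and hlt
  have hgen : ∀ Z : Finset Ω, ‖hge h R Z‖ = if fdiam Z < R then 0 else ‖h Z‖ := by
    intro Z
    rw [hge, hlt]
    split
    · rw [sub_self, norm_zero]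
    · rw [sub_zero]
  have hge_empty : hge h R (∅ : Finset Ω) = 0 := by
    rw [hge, hlt, if_pos]
    · rw [sub_self]
    · rw [fdiam]
      simp only [Finset.coe_empty, Metric.diam_empty]
      linarith
  -- trivial case: Λ empty
  rcases eq_or_ne Λ ∅ with rfl | hΛne
  · have hXe : X = ∅ := Finset.subset_empty.mp hXΛ
    have : ∀ Z ∈ (∅ : Finset Ω).powerset.filter (fun Z => Z ∩ nbhd ∅ X r = ∅),
        ‖opComm (heis (Ham ∅ (hlt h R)) t A) (hge h R Z)‖ = 0 := by
      intro Z hZ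
      rw [Finset.mem_filter, Finset.mem_powerset, Finset.subset_empty] at hZ
      rw [hZ.1, hge_empty, opComm, mul_zero, zero_mul, sub_zero, norm_zero]
    rw [Finset.sum_congr rfl this, Finset.sum_const, smul_zero, hXe]
    positivity
  -- C₀ is nonnegative
  obtain ⟨x₀, hx₀⟩ := Finset.nonempty_iff_ne_empty.mpr hΛne
  have hC₀ : (0:ℝ) ≤ C₀ := by
    refine le_trans ?_ (hAii x₀ hx₀)
    apply Finset.sum_nonneg
    intro y _
    apply Finset.sum_nonneg
    intro Z _
    exact norm_nonneg _
  -- properties of the truncated interaction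
  set Φ := hlt h R with hΦdef
  have hΦmem : ∀ Z : Finset Ω, Z ⊆ Λ → Φ Z ∈ 𝓐 Z := by
    intro Z hZ
    rw [hΦdef, hlt]
    split
    · exact hmem Z hZ
    · exact zero_mem _
  have hΦsa : ∀ Z, IsSelfAdjoint (Φ Z) := by
    intro Z
    rw [hΦdef, hlt]
    split
    · exact hsa Z
    · exact (IsSelfAdjoint.zero _)
  have hdiam : ∀ Z, Φ Z ≠ 0 → fdiam Z < R := by
    intro Z hZ
    by_contra hcon
    exact hZ (by rw [hΦdef, hlt, if_neg hcon])
  have hΦnorm : ∀ Z, ‖Φ Z‖ ≤ ‖h Z‖ := by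
    intro Z
    rw [hΦdef, hlt]
    split
    · exact le_rfl
    · rw [norm_zero]; exact norm_nonneg _
  have hsum := sum_weighted_le Λ h Φ C₀ hAii hΦnorm
  -- separation of the summands from X
  have hsep : ∀ Z ∈ filt, ∀ z ∈ Z, ∀ x ∈ X, r < dist x z := by
    intro Z hZ z hz x hx
    rw [hfilt, Finset.mem_filter] at hZ
    have hzΛ : z ∈ Λ := Finset.mem_powerset.mp hZ.1 hz
    have hznb : z ∉ nbhd Λ X r := by
      intro hcon
      have : z ∈ Z ∩ nbhd Λ X r := Finset.mem_inter.mpr ⟨hz, hcon⟩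
      rw [hZ.2] at this
      exact absurd this (Finset.notMem_empty z)
    rw [nbhd, Finset.mem_filter] at hznb
    push_neg at hznb
    rw [dist_comm]
    exact hznb hzΛ x hx
  -- per-summand Lieb-Robinson bound
  have hperZ : ∀ Z ∈ filt, ‖opComm (heis (Ham Λ Φ) t A) (hge h R Z)‖ ≤
      2 * ‖A‖ * ‖hge h R Z‖ * (X.card : ℝ) * Real.exp v *
        ∑ z ∈ Z, ∑ x ∈ X, Real.exp (-(dist x z / R)) := by
    intro Z hZ
    have hZΛ : Z ⊆ Λ := Finset.mem_powerset.mp (Finset.mem_filter.mp hZ).1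
    have hB : hge h R Z ∈ 𝓐 Z := sub_mem (hmem Z hZΛ) (hΦmem Z hZΛ)
    rcases Finset.eq_empty_or_nonempty Z with rfl | hZne
    · rw [hge_empty, opComm, mul_zero, zero_mul, sub_zero, norm_zero]
      simp
    rcases Finset.eq_empty_or_nonempty X with rfl | hXne
    · have hLR := LR_bound Λ 𝓐 Φ A (hge h R Z) ∅ Z hloc hΦmem hΦsa hA hXΛ hB hR0 hdiam
        hC₀ hsum (le_refl (0:ℝ)) (by intro x hx; exact absurd hx (Finset.notMem_empty x))
        (by simp) ht
      simp only [Finset.card_empty, Nat.cast_zero, mul_zero, zero_mul] at hLR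
      refine le_trans hLR ?_
      simp
    -- both nonempty
    have hXZdisj : X ∩ Z = ∅ := by
      rw [Finset.eq_empty_iff_forall_notMem]
      intro a ha
      rw [Finset.mem_inter] at ha
      have := hsep Z hZ a ha.2 a ha.1
      rw [dist_self] at this
      linarith
    set pairs := (X ×ˢ Z).image (fun p : Ω × Ω => dist p.1 p.2) with hpairs
    have hpne : pairs.Nonempty := Finset.Nonempty.image (hXne.product hZne) _
    set δ := pairs.min' hpne with hδdef
    obtain ⟨p₀, hp₀mem, hp₀⟩ := Finset.mem_image.mp (pairs.min'_mem hpne)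
    have hδ0 : 0 ≤ δ := by rw [hδdef, ← hp₀]; exact dist_nonneg
    have hδle : ∀ x ∈ X, ∀ z ∈ Z, δ ≤ dist x z := by
      intro x hx z hz
      apply Finset.min'_le
      exact Finset.mem_image.mpr ⟨(x, z), Finset.mem_product.mpr ⟨hx, hz⟩, rfl⟩
    have hLR := LR_bound Λ 𝓐 Φ A (hge h R Z) X Z hloc hΦmem hΦsa hA hXΛ hB hR0 hdiam
      hC₀ hsum hδ0 hδle hXZdisj ht
    refine le_trans hLR ?_
    have hes : Real.exp (-(δ / R)) ≤ ∑ z ∈ Z, ∑ x ∈ X, Real.exp (-(dist x z / R)) := by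
      obtain ⟨hx₁, hz₁⟩ := Finset.mem_product.mp hp₀mem
      calc Real.exp (-(δ / R)) = Real.exp (-(dist p₀.1 p₀.2 / R)) := by rw [hp₀]
        _ ≤ ∑ x ∈ X, Real.exp (-(dist x p₀.2 / R)) :=
            Finset.single_le_sum (f := fun x => Real.exp (-(dist x p₀.2 / R)))
              (fun x _ => (Real.exp_pos _).le) hx₁
        _ ≤ ∑ z ∈ Z, ∑ x ∈ X, Real.exp (-(dist x z / R)) :=
            Finset.single_le_sum (f := fun z => ∑ x ∈ X, Real.exp (-(dist x z / R)))
              (fun z _ => Finset.sum_nonneg fun x _ => (Real.exp_pos _).le) hz₁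
    calc 2 * ‖A‖ * ‖hge h R Z‖ * (X.card : ℝ) * Real.exp (v - δ / R)
        = (2 * ‖A‖ * ‖hge h R Z‖ * (X.card : ℝ) * Real.exp v) * Real.exp (-(δ / R)) := by
          rw [show v - δ/R = v + -(δ/R) by ring, Real.exp_add]
          ring
      _ ≤ (2 * ‖A‖ * ‖hge h R Z‖ * (X.card : ℝ) * Real.exp v)
            * ∑ z ∈ Z, ∑ x ∈ X, Real.exp (-(dist x z / R)) :=
          mul_le_mul_of_nonneg_left hes (by positivity)
  -- sum the per-summand bounds
  have hstep1 : ∑ Z ∈ filt, ‖opComm (heis (Ham Λ Φ) t A) (hge h R Z)‖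
      ≤ 2 * ‖A‖ * (X.card : ℝ) * Real.exp v *
        ∑ Z ∈ filt, ∑ z ∈ Z, ‖hge h R Z‖ * ∑ x ∈ X, Real.exp (-(dist x z / R)) := by
    calc ∑ Z ∈ filt, ‖opComm (heis (Ham Λ Φ) t A) (hge h R Z)‖
        ≤ ∑ Z ∈ filt, 2 * ‖A‖ * ‖hge h R Z‖ * (X.card : ℝ) * Real.exp v *
            ∑ z ∈ Z, ∑ x ∈ X, Real.exp (-(dist x z / R)) := Finset.sum_le_sum hperZ
      _ = 2 * ‖A‖ * (X.card : ℝ) * Real.exp v *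
            ∑ Z ∈ filt, ∑ z ∈ Z, ‖hge h R Z‖ * ∑ x ∈ X, Real.exp (-(dist x z / R)) := by
          rw [Finset.mul_sum]
          apply Finset.sum_congr rfl
          intro Z _
          rw [← Finset.mul_sum]
          ring
  have hswap : ∑ Z ∈ filt, ∑ z ∈ Z, ‖hge h R Z‖ * ∑ x ∈ X, Real.exp (-(dist x z / R))
      = ∑ z ∈ Λ, ∑ Z ∈ filt.filter (fun Z => z ∈ Z),
          ‖hge h R Z‖ * ∑ x ∈ X, Real.exp (-(dist x z / R)) := by
    apply Finset.sum_comm'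
    intro Z z
    simp only [Finset.mem_filter]
    constructor
    · rintro ⟨h1, h2⟩
      exact ⟨⟨h1, h2⟩, Finset.mem_powerset.mp (Finset.mem_filter.mp (hfilt ▸ h1)).1 h2⟩
    · rintro ⟨⟨h1, h2⟩, _⟩
      exact ⟨h1, h2⟩
  -- bound the sum of interactions containing a fixed far point
  have hW : ∀ z ∈ Λ, ∑ Z ∈ filt.filter (fun Z => z ∈ Z), ‖hge h R Z‖ ≤ f R := by
    intro z hz
    have h1 : ∑ Z ∈ (filt.filter (fun Z => z ∈ Z)).filter (fun Z => R ≤ fdiam Z), ‖h Z‖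
        = ∑ Z ∈ filt.filter (fun Z => z ∈ Z), ‖hge h R Z‖ := by
      rw [Finset.sum_filter]
      apply Finset.sum_congr rfl
      intro Z _
      rw [hgen Z]
      rcases lt_or_ge (fdiam Z) R with hlt' | hge'
      · rw [if_neg (not_le.mpr hlt'), if_pos hlt']
      · rw [if_pos hge', if_neg (not_lt.mpr hge')]
    rw [← h1]
    refine le_trans ?_ (hAi R (by linarith) z hz)
    apply Finset.sum_le_sum_of_subset_of_nonneg
    · intro Z hZ
      simp only [Finset.mem_filter, hfilt] at hZ ⊢
      exact ⟨hZ.1.1.1, hZ.1.2, hZ.2⟩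
    · intro Z _ _
      exact norm_nonneg _
  have hz_bound : ∀ z ∈ Λ,
      ∑ Z ∈ filt.filter (fun Z => z ∈ Z),
          ‖hge h R Z‖ * ∑ x ∈ X, Real.exp (-(dist x z / R))
        ≤ f R * ∑ x ∈ X, (if r < dist x z then Real.exp (-(dist x z / R)) else 0) := by
    intro z hz
    rw [← Finset.sum_mul]
    rcases (filt.filter (fun Z => z ∈ Z)).eq_empty_or_nonempty with he | hne
    · rw [he, Finset.sum_empty, zero_mul]
      apply mul_nonneg hfR
      apply Finset.sum_nonneg
      intro x _
      split
      · exact (Real.exp_pos _).le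
      · exact le_rfl
    · obtain ⟨Z₁, hZ₁⟩ := hne
      rw [Finset.mem_filter] at hZ₁
      have hsepz : ∀ x ∈ X, r < dist x z := fun x hx => hsep Z₁ hZ₁.1 z hZ₁.2 x hx
      have hEz : ∑ x ∈ X, (if r < dist x z then Real.exp (-(dist x z / R)) else 0)
          = ∑ x ∈ X, Real.exp (-(dist x z / R)) :=
        Finset.sum_congr rfl fun x hx => if_pos (hsepz x hx)
      rw [hEz]
      exact mul_le_mul_of_nonneg_right (hW z hz)
        (Finset.sum_nonneg fun x _ => (Real.exp_pos _).le)
  -- shell sums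
  have hshell : ∑ z ∈ Λ, ∑ x ∈ X, (if r < dist x z then Real.exp (-(dist x z / R)) else 0)
      ≤ (X.card : ℝ) * (C * (2*D)^D * Real.exp (3/2 - D) * 3 * (max r R) ^ D
          * Real.exp (-(r/R))) := by
    rw [Finset.sum_comm]
    have hx_bound : ∀ x ∈ X,
        ∑ z ∈ Λ, (if r < dist x z then Real.exp (-(dist x z / R)) else 0)
          ≤ C * (2*D)^D * Real.exp (3/2 - D) * 3 * (max r R) ^ D * Real.exp (-(r/R)) := by
      intro x _
      rw [← Finset.sum_filter]
      exact shell_bound C D hC hD g hfin hg Λ x hr hR1 hgC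
    calc ∑ x ∈ X, ∑ z ∈ Λ, (if r < dist x z then Real.exp (-(dist x z / R)) else 0)
        ≤ ∑ _x ∈ X, (C * (2*D)^D * Real.exp (3/2 - D) * 3 * (max r R) ^ D
            * Real.exp (-(r/R))) := Finset.sum_le_sum hx_bound
      _ = (X.card : ℝ) * (C * (2*D)^D * Real.exp (3/2 - D) * 3 * (max r R) ^ D
            * Real.exp (-(r/R))) := by rw [Finset.sum_const, nsmul_eq_mul]
  -- put everything together
  have htotal : ∑ Z ∈ filt, ‖opComm (heis (Ham Λ Φ) t A) (hge h R Z)‖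
      ≤ 2 * ‖A‖ * (X.card : ℝ) * Real.exp v * (f R * ((X.card : ℝ)
        * (C * (2*D)^D * Real.exp (3/2 - D) * 3 * (max r R) ^ D * Real.exp (-(r/R))))) := by
    refine le_trans hstep1 ?_
    apply mul_le_mul_of_nonneg_left _ (by positivity)
    rw [hswap]
    calc ∑ z ∈ Λ, ∑ Z ∈ filt.filter (fun Z => z ∈ Z),
          ‖hge h R Z‖ * ∑ x ∈ X, Real.exp (-(dist x z / R))
        ≤ ∑ z ∈ Λ, f R * ∑ x ∈ X,
            (if r < dist x z then Real.exp (-(dist x z / R)) else 0) :=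
          Finset.sum_le_sum hz_bound
      _ = f R * ∑ z ∈ Λ, ∑ x ∈ X,
            (if r < dist x z then Real.exp (-(dist x z / R)) else 0) := by
          rw [Finset.mul_sum]
      _ ≤ f R * ((X.card : ℝ) * (C * (2*D)^D * Real.exp (3/2 - D) * 3 * (max r R) ^ D
            * Real.exp (-(r/R)))) := mul_le_mul_of_nonneg_left hshell hfR
  refine le_trans htotal ?_
  have hexp : Real.exp (v - r/R) = Real.exp v * Real.exp (-(r/R)) := by
    rw [show v - r/R = v + -(r/R) by ring, Real.exp_add]
  have hMD : (0:ℝ) ≤ (max r R) ^ D := Real.rpow_nonneg (le_max_of_le_right hR0.le) D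
  have hkey : 2 * ‖A‖ * (X.card : ℝ) * Real.exp v * (f R * ((X.card : ℝ)
        * (C * (2*D)^D * Real.exp (3/2 - D) * 3 * (max r R) ^ D * Real.exp (-(r/R)))))
      = C₂ * ‖A‖ * (X.card : ℝ) ^ 2 * max r R ^ D * 1 * f R * Real.exp (v - r/R) := by
    rw [hexp, hC₂def]
    ring
  rw [hv] at hkey
  rw [hkey]
  have h1R : (1:ℝ) ≤ R := hR1
  apply mul_le_mul_of_nonneg_right _ (Real.exp_pos _).le
  apply mul_le_mul_of_nonneg_right _ hfR
  apply mul_le_mul_of_nonneg_left h1R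
  positivity
end
end

section
/- Assume Assumption A (i) and the volume bound. Then for every A ∈ 𝒜_X with X ⊆ Λ, every t ≥ 0, r > 0 and R ≥ 1: Σ_{Z⊆Λ: Z∩X̃_r ≠ ∅} ∫₀ᵗ ‖[τ^{(<R)}_{t−s,Λ}(A), h_Z^{(≥R)}]‖ ds ≤ 2t‖A‖|X| g(r) f(R). -/
noncomputable section

open Complex

variable {Ω : Type*} [MetricSpace Ω]
variable {H : Type*} [NormedAddCommGroup H] [InnerProductSpace ℂ H] [CompleteSpace H]

lemma exp_unitary (K : H →L[ℂ] H) (hK : IsSelfAdjoint K) (c : ℂ) (hc : (starRingEnd ℂ) c = -c) :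
    NormedSpace.exp (c • K) ∈ unitary (H →L[ℂ] H) := by
  let +nondep : NormedAlgebra ℚ (H →L[ℂ] H) := .restrictScalars ℚ ℂ (H →L[ℂ] H)
  apply NormedSpace.exp_mem_unitary_of_mem_skewAdjoint
  rw [skewAdjoint.mem_iff, star_smul, hK.star_eq, Complex.star_def, hc, neg_smul]

lemma heis_norm (K A : H →L[ℂ] H) (hK : IsSelfAdjoint K) (s : ℝ) : ‖heis K s A‖ = ‖A‖ := by
  have hU : NormedSpace.exp ((I * (s:ℂ)) • K) ∈ unitary (H →L[ℂ] H) :=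
    exp_unitary K hK _ (by simp [map_mul, Complex.conj_I, Complex.conj_ofReal])
  have hV : NormedSpace.exp ((-(I * (s:ℂ))) • K) ∈ unitary (H →L[ℂ] H) :=
    exp_unitary K hK _ (by simp [map_mul, Complex.conj_I, Complex.conj_ofReal])
  unfold heis
  rw [mul_assoc, CStarRing.norm_mem_unitary_mul _ hU, CStarRing.norm_mul_mem_unitary _ hV]

lemma heis_cont (K A : H →L[ℂ] H) : Continuous fun s : ℝ => heis K s A := by
  let +nondep : NormedAlgebra ℚ (H →L[ℂ] H) := .restrictScalars ℚ ℂ (H →L[ℂ] H)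
  have h1 : Continuous fun s : ℝ => NormedSpace.exp ((I * (s:ℂ)) • K) :=
    NormedSpace.exp_continuous.comp ((continuous_const.mul Complex.continuous_ofReal : Continuous fun s : ℝ => I * (s:ℂ)).smul continuous_const)
  have h2 : Continuous fun s : ℝ => NormedSpace.exp ((-(I * (s:ℂ))) • K) :=
    NormedSpace.exp_continuous.comp (((continuous_const.mul Complex.continuous_ofReal : Continuous fun s : ℝ => I * (s:ℂ)).neg).smul continuous_const)
  exact (h1.mul continuous_const).mul h2


/-- The bound on the second term of Lemma 3.1: under Assumption A (i) and the volume bound,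
`Σ_{Z∩X̃_r ≠ ∅} ∫₀ᵗ ‖[τ^{(<R)}_{t−s,Λ}(A), h_Z^{(≥R)}]‖ ds ≤ 2t‖A‖|X| g(r) f(R)`. -/
theorem statement_4
    {Ω : Type*} [MetricSpace Ω] [Countable Ω] [DecidableEq Ω]
    {H : Type*} [NormedAddCommGroup H] [InnerProductSpace ℂ H] [CompleteSpace H]
    (Λ : Finset Ω) (𝓐 : Finset Ω → Subalgebra ℂ (H →L[ℂ] H))
    (hmono : ∀ S S' : Finset Ω, S ⊆ S' → 𝓐 S ≤ 𝓐 S')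
    (hstar : ∀ S : Finset Ω, ∀ a ∈ 𝓐 S, star a ∈ 𝓐 S)
    (hloc : ∀ S S' : Finset Ω, Disjoint S S' →
      ∀ a ∈ 𝓐 S, ∀ b ∈ 𝓐 S', a * b = b * a)
    (h : Finset Ω → (H →L[ℂ] H))
    (hmem : ∀ Z : Finset Ω, Z ⊆ Λ → h Z ∈ 𝓐 Z)
    (hsa : ∀ Z : Finset Ω, IsSelfAdjoint (h Z))
    -- Assumption A (i)
    (f : ℝ → ℝ) (hfdec : AntitoneOn f (Set.Ici 0)) (hfnn : ∀ R, 0 ≤ R → 0 ≤ f R)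
    (hf : ∀ R', 0 ≤ R' → ∀ x ∈ Λ,
      ∑ Z ∈ Λ.powerset.filter (fun Z => x ∈ Z ∧ R' ≤ fdiam Z), ‖h Z‖ ≤ f R')
    -- volume bound
    (g : ℝ → ℝ) (hgmono : MonotoneOn g (Set.Ici 0))
    (hfin : ∀ (x : Ω) (ρ : ℝ), 0 ≤ ρ → ({y : Ω | dist x y ≤ ρ}).Finite)
    (hg : ∀ (x : Ω) (ρ : ℝ), 0 ≤ ρ → (({y : Ω | dist x y ≤ ρ}).ncard : ℝ) ≤ g ρ)
    (X : Finset Ω) (hXΛ : X ⊆ Λ) (A : H →L[ℂ] H) (hA : A ∈ 𝓐 X)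
    (t r R : ℝ) (ht : 0 ≤ t) (hr : 0 < r) (hR : 1 ≤ R) :
    ∑ Z ∈ Λ.powerset.filter (fun Z => Z ∩ nbhd Λ X r ≠ ∅),
        ∫ s in (0:ℝ)..t, ‖opComm (heis (Ham Λ (hlt h R)) (t - s) A) (hge h R Z)‖ ≤
      2 * t * ‖A‖ * X.card * g r * f R := by
  classical
  set K := Ham Λ (hlt h R) with hKdef
  have hKsa : IsSelfAdjoint K := by
    rw [IsSelfAdjoint, hKdef, Ham, star_sum]
    refine Finset.sum_congr rfl fun Z _ => ?_
    unfold hlt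
    split
    · exact (hsa Z).star_eq
    · exact star_zero _
  set S := Λ.powerset.filter (fun Z => Z ∩ nbhd Λ X r ≠ ∅) with hSdef
  set N := nbhd Λ X r with hNdef
  have hRnn : (0:ℝ) ≤ R := le_trans zero_le_one hR
  have hfRnn : 0 ≤ f R := hfnn R hRnn
  -- pointwise bound on the commutator norm
  have hcommb : ∀ (Z : Finset Ω) (s : ℝ),
      ‖opComm (heis K (t - s) A) (hge h R Z)‖ ≤ 2 * ‖A‖ * ‖hge h R Z‖ := by
    intro Z s
    have h1 : ‖opComm (heis K (t - s) A) (hge h R Z)‖ ≤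
        ‖heis K (t-s) A * hge h R Z‖ + ‖hge h R Z * heis K (t-s) A‖ := norm_sub_le _ _
    have h2 : ‖heis K (t-s) A * hge h R Z‖ ≤ ‖heis K (t-s) A‖ * ‖hge h R Z‖ := norm_mul_le _ _
    have h3 : ‖hge h R Z * heis K (t-s) A‖ ≤ ‖hge h R Z‖ * ‖heis K (t-s) A‖ := norm_mul_le _ _
    have h4 : ‖heis K (t-s) A‖ = ‖A‖ := heis_norm K A hKsa _
    rw [h4] at h2 h3
    calc ‖opComm (heis K (t - s) A) (hge h R Z)‖ ≤ _ := h1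
      _ ≤ ‖A‖ * ‖hge h R Z‖ + ‖hge h R Z‖ * ‖A‖ := add_le_add h2 h3
      _ = 2 * ‖A‖ * ‖hge h R Z‖ := by ring
  -- integral bound
  have hint : ∀ Z : Finset Ω,
      (∫ s in (0:ℝ)..t, ‖opComm (heis K (t - s) A) (hge h R Z)‖) ≤
        t * (2 * ‖A‖ * ‖hge h R Z‖) := by
    intro Z
    have hcont : Continuous fun s : ℝ => ‖opComm (heis K (t - s) A) (hge h R Z)‖ := by
      have hh : Continuous fun s : ℝ => heis K (t - s) A :=
        (heis_cont K A).comp (continuous_const.sub continuous_id)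
      exact ((hh.mul continuous_const).sub (continuous_const.mul hh)).norm
    calc (∫ s in (0:ℝ)..t, ‖opComm (heis K (t - s) A) (hge h R Z)‖)
        ≤ ∫ _ in (0:ℝ)..t, 2 * ‖A‖ * ‖hge h R Z‖ := by
          apply intervalIntegral.integral_mono_on ht
            (hcont.intervalIntegrable 0 t) (intervalIntegrable_const)
          intro s _; exact hcommb Z s
      _ = t * (2 * ‖A‖ * ‖hge h R Z‖) := by
          rw [intervalIntegral.integral_const]; simp [smul_eq_mul]
  -- sum of interaction norms
  have hsumhge : ∑ Z ∈ S, ‖hge h R Z‖ ≤ (N.card : ℝ) * f R := by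
    have step1 : ∀ Z ∈ S, ‖hge h R Z‖ ≤
        ∑ x ∈ N, (if x ∈ Z ∧ R ≤ fdiam Z then ‖h Z‖ else 0) := by
      intro Z hZ
      rw [hSdef, Finset.mem_filter] at hZ
      by_cases hd : fdiam Z < R
      · have : hge h R Z = 0 := by unfold hge hlt; rw [if_pos hd, sub_self]
        rw [this, norm_zero]
        exact Finset.sum_nonneg fun x _ => by positivity
      · have hge_eq : hge h R Z = h Z := by unfold hge hlt; rw [if_neg hd, sub_zero]
        obtain ⟨x0, hx0⟩ := Finset.nonempty_of_ne_empty hZ.2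
        rw [Finset.mem_inter] at hx0
        have hterm : (if x0 ∈ Z ∧ R ≤ fdiam Z then ‖h Z‖ else 0) = ‖h Z‖ :=
          if_pos ⟨hx0.1, not_lt.mp hd⟩
        rw [hge_eq]
        calc ‖h Z‖ = _ := hterm.symm
          _ ≤ _ := Finset.single_le_sum (f := fun x => if x ∈ Z ∧ R ≤ fdiam Z then ‖h Z‖ else 0)
              (fun x _ => by positivity) hx0.2
    calc ∑ Z ∈ S, ‖hge h R Z‖
        ≤ ∑ Z ∈ S, ∑ x ∈ N, (if x ∈ Z ∧ R ≤ fdiam Z then ‖h Z‖ else 0) :=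
          Finset.sum_le_sum step1
      _ = ∑ x ∈ N, ∑ Z ∈ S, (if x ∈ Z ∧ R ≤ fdiam Z then ‖h Z‖ else 0) := Finset.sum_comm
      _ ≤ ∑ x ∈ N, f R := by
          apply Finset.sum_le_sum
          intro x hx
          have hxΛ : x ∈ Λ := Finset.mem_of_mem_filter x hx
          rw [← Finset.sum_filter]
          calc ∑ Z ∈ S.filter (fun Z => x ∈ Z ∧ R ≤ fdiam Z), ‖h Z‖
              ≤ ∑ Z ∈ Λ.powerset.filter (fun Z => x ∈ Z ∧ R ≤ fdiam Z), ‖h Z‖ := by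
                apply Finset.sum_le_sum_of_subset_of_nonneg
                · intro Z hZ
                  simp only [hSdef, Finset.mem_filter] at hZ ⊢
                  exact ⟨hZ.1.1, hZ.2⟩
                · intro Z _ _; positivity
            _ ≤ f R := hf R hRnn x hxΛ
      _ = (N.card : ℝ) * f R := by rw [Finset.sum_const, nsmul_eq_mul]
  -- cardinality bound
  have hcard : (N.card : ℝ) ≤ (X.card : ℝ) * g r := by
    have hsub : N ⊆ X.biUnion (fun x => (hfin x r hr.le).toFinset) := by
      intro z hz
      rw [hNdef, nbhd, Finset.mem_filter] at hz
      obtain ⟨x, hxX, hdist⟩ := hz.2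
      rw [Finset.mem_biUnion]
      exact ⟨x, hxX, by rw [Set.Finite.mem_toFinset]; rw [Set.mem_setOf_eq, dist_comm]; exact hdist⟩
    have h1 : N.card ≤ ∑ x ∈ X, ((hfin x r hr.le).toFinset).card :=
      le_trans (Finset.card_le_card hsub) Finset.card_biUnion_le
    have h2 : (N.card : ℝ) ≤ ∑ x ∈ X, (((hfin x r hr.le).toFinset).card : ℝ) := by
      push_cast
      exact_mod_cast h1
    calc (N.card : ℝ) ≤ ∑ x ∈ X, (((hfin x r hr.le).toFinset).card : ℝ) := h2
      _ ≤ ∑ x ∈ X, g r := by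
          apply Finset.sum_le_sum
          intro x _
          have := hg x r hr.le
          rwa [Set.ncard_eq_toFinset_card _ (hfin x r hr.le)] at this
      _ = (X.card : ℝ) * g r := by rw [Finset.sum_const, nsmul_eq_mul]
  -- combine
  have hAnn : (0:ℝ) ≤ ‖A‖ := norm_nonneg _
  calc ∑ Z ∈ S, ∫ s in (0:ℝ)..t, ‖opComm (heis K (t - s) A) (hge h R Z)‖
      ≤ ∑ Z ∈ S, t * (2 * ‖A‖ * ‖hge h R Z‖) := Finset.sum_le_sum fun Z _ => hint Z
    _ = 2 * t * ‖A‖ * ∑ Z ∈ S, ‖hge h R Z‖ := by rw [Finset.mul_sum]; exact Finset.sum_congr rfl fun Z _ => by ring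
    _ ≤ 2 * t * ‖A‖ * ((N.card : ℝ) * f R) := by
        apply mul_le_mul_of_nonneg_left hsumhge (by positivity)
    _ ≤ 2 * t * ‖A‖ * (((X.card : ℝ) * g r) * f R) := by
        apply mul_le_mul_of_nonneg_left (mul_le_mul_of_nonneg_right hcard hfRnn) (by positivity)
    _ = 2 * t * ‖A‖ * X.card * g r * f R := by ring
end
end

section
/- Let (Ω, d) be a metric space and suppose there are constants C > 0 and D > 0 with #{z ∈ Ω : d(x,z) ≤ ρ} ≤ C(1+ρ)^D for all x ∈ Ω and ρ ≥ 0. Then there is a constant C₃ > 0, depending only on C and D, such that for every x ∈ Ω, every r > 0 and every R ≥ 1: Σ_{k=0}^∞ #{z ∈ Ω : d(x,z) ≤ r+k+1} · e^{−(r+k)/R} ≤ C₃ (max(r,R))^D R e^{−r/R}. -/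
noncomputable section

private lemma aux_add_rpow (a b D : ℝ) (ha : 0 ≤ a) (hb : 0 ≤ b) (hD : 0 ≤ D) :
    (a + b) ^ D ≤ 2 ^ D * (a ^ D + b ^ D) := by
  have key : ∀ u v : ℝ, 0 ≤ u → 0 ≤ v → u ≤ v → (u + v) ^ D ≤ 2 ^ D * (u ^ D + v ^ D) := by
    intro u v hu hv huv
    calc (u + v) ^ D ≤ (2 * v) ^ D :=
          Real.rpow_le_rpow (by linarith) (by linarith) hD
      _ = 2 ^ D * v ^ D := Real.mul_rpow (by norm_num) hv
      _ ≤ 2 ^ D * (u ^ D + v ^ D) := by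
          have h1 : 0 ≤ u ^ D := Real.rpow_nonneg hu D
          have h2 : (0:ℝ) ≤ 2 ^ D := Real.rpow_nonneg (by norm_num) D
          nlinarith
  rcases le_total a b with h | h
  · exact key a b ha hb h
  · have := key b a hb ha h
    linarith [this, show (b + a) ^ D = (a + b) ^ D by ring_nf]

private lemma aux_rpow_le_exp (s D : ℝ) (hs : 0 ≤ s) (hD : 0 < D) :
    s ^ D ≤ D ^ D * Real.exp s := by
  have hsD : 0 ≤ s / D := div_nonneg hs hD.le
  have h1 : s / D ≤ Real.exp (s / D) := by
    have := Real.add_one_le_exp (s / D); linarith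
  have h2 : (s / D) ^ D ≤ (Real.exp (s / D)) ^ D := Real.rpow_le_rpow hsD h1 hD.le
  have h3 : (Real.exp (s / D)) ^ D = Real.exp s := by
    rw [← Real.exp_mul]; congr 1; field_simp
  have h4 : s ^ D = D ^ D * (s / D) ^ D := by
    rw [← Real.mul_rpow hD.le hsD]; congr 1; field_simp
  rw [h4, ← h3]
  have h5 : (0:ℝ) ≤ D ^ D := Real.rpow_nonneg hD.le D
  nlinarith

/-- The elementary computation (B.1): if `#{z : d(x,z) ≤ ρ} ≤ C(1+ρ)^D`, then there is
`C₃ > 0` depending only on `C` and `D` such that for `r > 0` and `R ≥ 1`,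
`Σ_{k=0}^∞ #{z : d(x,z) ≤ r+k+1} e^{−(r+k)/R} ≤ C₃ (max(r,R))^D R e^{−r/R}`. -/
theorem statement_12 (C D : ℝ) (hC : 0 < C) (hD : 0 < D) :
    ∃ C₃ : ℝ, 0 < C₃ ∧
    ∀ (Ω : Type) (_ : MetricSpace Ω) (_ : Countable Ω),
      (∀ (x : Ω) (ρ : ℝ), 0 ≤ ρ → ({z : Ω | dist x z ≤ ρ}).Finite) →
      (∀ (x : Ω) (ρ : ℝ), 0 ≤ ρ →
        (({z : Ω | dist x z ≤ ρ}).ncard : ℝ) ≤ C * (1 + ρ) ^ D) →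
      ∀ (x : Ω) (r R : ℝ), 0 < r → 1 ≤ R →
        ∑' k : ℕ,
            (({z : Ω | dist x z ≤ r + k + 1}).ncard : ℝ) *
              Real.exp (-(r + k) / R) ≤
          C₃ * max r R ^ D * R * Real.exp (-r / R) := by
  refine ⟨C * 2 ^ D * (2 * 3 ^ D + 4 * (2 * D) ^ D), by positivity, ?_⟩
  intro Ω _ _ hfin hcard x r R hr hR
  have hR0 : (0:ℝ) < R := lt_of_lt_of_le one_pos hR
  set M := max r R with hM
  have hrM : r ≤ M := le_max_left _ _
  have hRM : R ≤ M := le_max_right _ _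
  have hM0 : 0 < M := lt_of_lt_of_le hR0 hRM
  set q1 := Real.exp (-(1 / R)) with hq1def
  set q2 := Real.exp (-(1 / (2 * R))) with hq2def
  have hq1pos : 0 < q1 := Real.exp_pos _
  have hq2pos : 0 < q2 := Real.exp_pos _
  have hq1lt : q1 < 1 := Real.exp_lt_one_iff.mpr (neg_neg_of_pos (by positivity))
  have hq2lt : q2 < 1 := Real.exp_lt_one_iff.mpr (neg_neg_of_pos (by positivity))
  set E := Real.exp (-r / R) with hEdef
  have hE : 0 < E := Real.exp_pos _
  set A := C * 2 ^ D * E * (2 + r) ^ D with hAdef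
  set B := C * 2 ^ D * E * (2 * R * D) ^ D with hBdef
  have hA0 : 0 ≤ A := by positivity
  have hB0 : 0 ≤ B := by positivity
  set f : ℕ → ℝ := fun k =>
    (({z : Ω | dist x z ≤ r + k + 1}).ncard : ℝ) * Real.exp (-(r + k) / R) with hfdef
  set u : ℕ → ℝ := fun k => A * q1 ^ k + B * q2 ^ k with hudef
  -- exp factorizations
  have hexp_split : ∀ k : ℕ, Real.exp (-(r + (k:ℝ)) / R) = E * q1 ^ k := by
    intro k
    rw [hEdef, hq1def, ← Real.exp_nat_mul, ← Real.exp_add]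
    congr 1; field_simp; ring
  have hq1q2 : ∀ k : ℕ, q1 ^ k = q2 ^ k * q2 ^ k := by
    intro k
    have h : q1 = q2 * q2 := by
      rw [hq1def, hq2def, ← Real.exp_add]; congr 1; field_simp; ring
    rw [h, mul_pow]
  -- termwise bound
  have hterm : ∀ k : ℕ, f k ≤ u k := by
    intro k
    have hρ : (0:ℝ) ≤ r + k + 1 := by positivity
    have hn : (({z : Ω | dist x z ≤ r + k + 1}).ncard : ℝ) ≤ C * (1 + (r + k + 1)) ^ D :=
      hcard x _ hρ
    have h1 : (1 + (r + (k:ℝ) + 1)) = (2 + r) + (k:ℝ) := by ring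
    have h2 : ((2 + r) + (k:ℝ)) ^ D ≤ 2 ^ D * ((2 + r) ^ D + (k:ℝ) ^ D) :=
      aux_add_rpow _ _ D (by linarith) (Nat.cast_nonneg k) hD.le
    have hkD : (k:ℝ) ^ D * q2 ^ k ≤ (2 * R * D) ^ D := by
      have hs : (0:ℝ) ≤ (k:ℝ) / (2 * R) := by positivity
      have h3 : ((k:ℝ) / (2 * R)) ^ D ≤ D ^ D * Real.exp ((k:ℝ) / (2 * R)) :=
        aux_rpow_le_exp _ D hs hD
      have h4 : (k:ℝ) ^ D = (2 * R) ^ D * ((k:ℝ) / (2 * R)) ^ D := by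
        rw [← Real.mul_rpow (by positivity) hs]; congr 1; field_simp
      have h5 : q2 ^ k = Real.exp (-((k:ℝ) / (2 * R))) := by
        rw [hq2def, ← Real.exp_nat_mul]; congr 1; field_simp
      have h6 : Real.exp ((k:ℝ) / (2 * R)) * Real.exp (-((k:ℝ) / (2 * R))) = 1 := by
        rw [← Real.exp_add]; simp
      have h7 : (2 * R * D) ^ D = (2 * R) ^ D * D ^ D :=
        Real.mul_rpow (by positivity) hD.le
      have h8 : (0:ℝ) ≤ (2 * R) ^ D := Real.rpow_nonneg (by positivity) D
      calc (k:ℝ) ^ D * q2 ^ k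
          = (2 * R) ^ D * (((k:ℝ) / (2 * R)) ^ D * Real.exp (-((k:ℝ) / (2 * R)))) := by
            rw [h4, h5]; ring
        _ ≤ (2 * R) ^ D * ((D ^ D * Real.exp ((k:ℝ) / (2 * R))) * Real.exp (-((k:ℝ) / (2 * R)))) := by
            have hep : 0 < Real.exp (-((k:ℝ) / (2 * R))) := Real.exp_pos _
            apply mul_le_mul_of_nonneg_left _ h8
            exact mul_le_mul_of_nonneg_right h3 hep.le
        _ = (2 * R * D) ^ D := by rw [h7, mul_assoc, h6]; ring
    have hfk : f k ≤ C * ((2 + r) + (k:ℝ)) ^ D * (E * q1 ^ k) := by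
      rw [hfdef]
      simp only []
      rw [← hexp_split k]
      have hep : 0 < Real.exp (-(r + (k:ℝ)) / R) := Real.exp_pos _
      calc (({z : Ω | dist x z ≤ r + k + 1}).ncard : ℝ) * Real.exp (-(r + (k:ℝ)) / R)
          ≤ (C * (1 + (r + k + 1)) ^ D) * Real.exp (-(r + (k:ℝ)) / R) :=
            mul_le_mul_of_nonneg_right hn hep.le
        _ = C * ((2 + r) + (k:ℝ)) ^ D * Real.exp (-(r + (k:ℝ)) / R) := by rw [h1]
    calc f k ≤ C * ((2 + r) + (k:ℝ)) ^ D * (E * q1 ^ k) := hfk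
      _ ≤ C * (2 ^ D * ((2 + r) ^ D + (k:ℝ) ^ D)) * (E * q1 ^ k) := by
          have : 0 ≤ E * q1 ^ k := by positivity
          apply mul_le_mul_of_nonneg_right _ this
          exact mul_le_mul_of_nonneg_left h2 hC.le
      _ = A * q1 ^ k + C * 2 ^ D * E * ((k:ℝ) ^ D * q2 ^ k) * q2 ^ k := by
          rw [hAdef, hq1q2 k]; ring
      _ ≤ A * q1 ^ k + B * q2 ^ k := by
          rw [hBdef]
          have h9 : (0:ℝ) ≤ C * 2 ^ D * E := by positivity
          have h10 : (0:ℝ) ≤ q2 ^ k := by positivity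
          have := mul_le_mul_of_nonneg_right
            (mul_le_mul_of_nonneg_left hkD h9) h10
          nlinarith
  -- summability
  have hsum1 : Summable (fun k : ℕ => q1 ^ k) := summable_geometric_of_lt_one hq1pos.le hq1lt
  have hsum2 : Summable (fun k : ℕ => q2 ^ k) := summable_geometric_of_lt_one hq2pos.le hq2lt
  have hsumu : Summable u := ((hsum1.mul_left A).add (hsum2.mul_left B))
  have hf0 : ∀ k, 0 ≤ f k := fun k => by positivity
  have hsumf : Summable f := Summable.of_nonneg_of_le hf0 hterm hsumu
  have hle1 : ∑' k, f k ≤ ∑' k, u k := Summable.tsum_le_tsum hterm hsumf hsumu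
  have htsumu : ∑' k, u k = A * (1 - q1)⁻¹ + B * (1 - q2)⁻¹ := by
    rw [hudef, Summable.tsum_add (hsum1.mul_left A) (hsum2.mul_left B), tsum_mul_left, tsum_mul_left,
      tsum_geometric_of_lt_one hq1pos.le hq1lt, tsum_geometric_of_lt_one hq2pos.le hq2lt]
  -- bounds on (1 - q)⁻¹
  have hinv1 : (1 - q1)⁻¹ ≤ 2 * R := by
    have he : 1 / R + 1 ≤ Real.exp (1 / R) := Real.add_one_le_exp _
    have hq1eq : q1 = (Real.exp (1 / R))⁻¹ := by
      rw [hq1def, ← Real.exp_neg]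
    have hexpos : 0 < Real.exp (1 / R) := Real.exp_pos _
    have hub : q1 ≤ (1 / R + 1)⁻¹ := by
      rw [hq1eq]
      exact inv_anti₀ (by positivity) he
    have hgap : 1 / (2 * R) ≤ 1 - q1 := by
      have h1 : (1 / R + 1)⁻¹ = R / (1 + R) := by field_simp
      have h2 : 1 - R / (1 + R) = 1 / (1 + R) := by field_simp; ring
      have h3 : 1 / (1 + R) ≥ 1 / (2 * R) := by
        apply one_div_le_one_div_of_le (by positivity) (by linarith)
      calc 1 / (2 * R) ≤ 1 / (1 + R) := h3
        _ = 1 - R / (1 + R) := h2.symm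
        _ = 1 - (1 / R + 1)⁻¹ := by rw [h1]
        _ ≤ 1 - q1 := by linarith
    have h4 := inv_anti₀ (show (0:ℝ) < 1 / (2 * R) by positivity) hgap
    rwa [one_div, inv_inv] at h4
  have hinv2 : (1 - q2)⁻¹ ≤ 4 * R := by
    have he : 1 / (2 * R) + 1 ≤ Real.exp (1 / (2 * R)) := Real.add_one_le_exp _
    have hq2eq : q2 = (Real.exp (1 / (2 * R)))⁻¹ := by
      rw [hq2def, ← Real.exp_neg]
    have hub : q2 ≤ (1 / (2 * R) + 1)⁻¹ := by
      rw [hq2eq]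
      exact inv_anti₀ (by positivity) he
    have hgap : 1 / (4 * R) ≤ 1 - q2 := by
      have h1 : (1 / (2 * R) + 1)⁻¹ = (2 * R) / (1 + 2 * R) := by field_simp
      have h2 : 1 - (2 * R) / (1 + 2 * R) = 1 / (1 + 2 * R) := by field_simp; ring
      have h3 : 1 / (1 + 2 * R) ≥ 1 / (4 * R) := by
        apply one_div_le_one_div_of_le (by positivity) (by linarith)
      calc 1 / (4 * R) ≤ 1 / (1 + 2 * R) := h3
        _ = 1 - (2 * R) / (1 + 2 * R) := h2.symm
        _ = 1 - (1 / (2 * R) + 1)⁻¹ := by rw [h1]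
        _ ≤ 1 - q2 := by linarith
    have h4 := inv_anti₀ (show (0:ℝ) < 1 / (4 * R) by positivity) hgap
    rwa [one_div, inv_inv] at h4
  -- bounds on the rpow factors
  have hAM : (2 + r) ^ D ≤ 3 ^ D * M ^ D := by
    rw [← Real.mul_rpow (by norm_num) hM0.le]
    exact Real.rpow_le_rpow (by linarith) (by linarith) hD.le
  have hBM : (2 * R * D) ^ D ≤ (2 * D) ^ D * M ^ D := by
    rw [← Real.mul_rpow (by positivity) hM0.le]
    exact Real.rpow_le_rpow (by positivity) (by nlinarith) hD.le
  have hfinal : A * (1 - q1)⁻¹ + B * (1 - q2)⁻¹ ≤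
      C * 2 ^ D * (2 * 3 ^ D + 4 * (2 * D) ^ D) * M ^ D * R * E := by
    have hAbd : A * (1 - q1)⁻¹ ≤ C * 2 ^ D * E * (3 ^ D * M ^ D) * (2 * R) := by
      have h1 : A ≤ C * 2 ^ D * E * (3 ^ D * M ^ D) := by
        rw [hAdef]
        exact mul_le_mul_of_nonneg_left hAM (by positivity)
      have h2 : (0:ℝ) ≤ (1 - q1)⁻¹ := inv_nonneg.mpr (by linarith)
      calc A * (1 - q1)⁻¹ ≤ (C * 2 ^ D * E * (3 ^ D * M ^ D)) * (1 - q1)⁻¹ :=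
            mul_le_mul_of_nonneg_right h1 h2
        _ ≤ (C * 2 ^ D * E * (3 ^ D * M ^ D)) * (2 * R) :=
            mul_le_mul_of_nonneg_left hinv1 (by positivity)
    have hBbd : B * (1 - q2)⁻¹ ≤ C * 2 ^ D * E * ((2 * D) ^ D * M ^ D) * (4 * R) := by
      have h1 : B ≤ C * 2 ^ D * E * ((2 * D) ^ D * M ^ D) := by
        rw [hBdef]
        exact mul_le_mul_of_nonneg_left hBM (by positivity)
      have h2 : (0:ℝ) ≤ (1 - q2)⁻¹ := inv_nonneg.mpr (by linarith)
      calc B * (1 - q2)⁻¹ ≤ (C * 2 ^ D * E * ((2 * D) ^ D * M ^ D)) * (1 - q2)⁻¹ :=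
            mul_le_mul_of_nonneg_right h1 h2
        _ ≤ (C * 2 ^ D * E * ((2 * D) ^ D * M ^ D)) * (4 * R) :=
            mul_le_mul_of_nonneg_left hinv2 (by positivity)
    calc A * (1 - q1)⁻¹ + B * (1 - q2)⁻¹
        ≤ C * 2 ^ D * E * (3 ^ D * M ^ D) * (2 * R)
          + C * 2 ^ D * E * ((2 * D) ^ D * M ^ D) * (4 * R) := add_le_add hAbd hBbd
      _ = C * 2 ^ D * (2 * 3 ^ D + 4 * (2 * D) ^ D) * M ^ D * R * E := by ring
  calc ∑' k, f k ≤ ∑' k, u k := hle1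
    _ = A * (1 - q1)⁻¹ + B * (1 - q2)⁻¹ := htsumu
    _ ≤ C * 2 ^ D * (2 * 3 ^ D + 4 * (2 * D) ^ D) * M ^ D * R * E := hfinal
end
end
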